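/- arXiv:2511.22509 — 8 statements merged into one kernel-verified Lean document; each statement's English description precedes it below -/
import Mathlib

section
/- Let Q be a Hermitian operator and ρ a density operator (positive semidefinite, trace one) on a finite-dimensional complex Hilbert space. Then Tr(Q²) + (Tr(ρQ))² ≥ 2 Tr(ρQ²). -/
open scoped ComplexOrder

lemma key_scalar {d : ℕ} (p q : Fin d → ℝ) (hp : ∀ i, 0 ≤ p i) (hs : ∑ i, p i = 1) :
    (∑ i, (q i)^2) + (∑ i, p i * q i)^2 ≥ 2 * ∑ i, p i * (q i)^2 := by
  set H : Fin d × Fin d → ℝ := fun x =>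
    p x.2 * (q x.1)^2 * (1 - p x.1) + p x.1 * (q x.2)^2 * (1 - p x.2)
      + 2 * p x.1 * p x.2 * q x.1 * q x.2 with hH
  set t := ∑ i, p i * q i with ht
  set A := ∑ i, (q i)^2 with hA
  set B := ∑ i, p i * (q i)^2 with hB
  set S := ∑ i, (q i)^2 * (1 - p i) with hS
  have hSAB : S = A - B := by
    rw [hS, hA, hB, ← Finset.sum_sub_distrib]
    exact Finset.sum_congr rfl fun i _ => by ring
  have hpair : ∀ i j : Fin d, i ≠ j → p i + p j ≤ 1 := by
    intro i j hij
    calc p i + p j = ∑ k ∈ ({i, j} : Finset (Fin d)), p k := (Finset.sum_pair hij).symm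
      _ ≤ ∑ k, p k := Finset.sum_le_sum_of_subset_of_nonneg (Finset.subset_univ _)
          (fun k _ _ => hp k)
      _ = 1 := hs
  have hoff : 0 ≤ ∑ x ∈ Finset.univ.offDiag, H x := by
    apply Finset.sum_nonneg
    intro x hx
    rw [Finset.mem_offDiag] at hx
    have h1 := hpair x.1 x.2 hx.2.2
    have h2 := hp x.1
    have h3 := hp x.2
    simp only [hH]
    nlinarith [sq_nonneg (p x.2 * q x.1 + p x.1 * q x.2),
      mul_nonneg (mul_nonneg h3 (sq_nonneg (q x.1))) (by linarith : (0:ℝ) ≤ 1 - p x.1 - p x.2),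
      mul_nonneg (mul_nonneg h2 (sq_nonneg (q x.2))) (by linarith : (0:ℝ) ≤ 1 - p x.1 - p x.2)]
  have hinner : ∀ i, ∑ j, H (i, j) = (q i)^2 * (1 - p i) + p i * S + (2 * t) * (p i * q i) := by
    intro i
    have e : ∀ j, H (i, j) = ((q i)^2 * (1 - p i)) * p j + p i * ((q j)^2 * (1 - p j))
        + (2 * (p i * q i)) * (p j * q j) := fun j => by simp only [hH]; ring
    rw [Finset.sum_congr rfl fun j _ => e j]
    rw [Finset.sum_add_distrib, Finset.sum_add_distrib, ← Finset.mul_sum, ← Finset.mul_sum,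
      ← Finset.mul_sum, hs, ← hS, ← ht]
    ring
  have hfull : ∑ x ∈ Finset.univ ×ˢ Finset.univ, H x = 2 * S + 2 * t^2 := by
    rw [Finset.sum_product]
    rw [Finset.sum_congr rfl fun i _ => hinner i]
    rw [Finset.sum_add_distrib, Finset.sum_add_distrib, ← Finset.sum_mul, ← Finset.mul_sum,
      hs, ← hS, ← ht]
    ring
  have hdiag : (∑ i : Fin d, H (i, i)) = 2 * B := by
    have e : ∀ i : Fin d, H (i, i) = 2 * (p i * (q i)^2) := fun i => by simp only [hH]; ring
    rw [Finset.sum_congr rfl fun i _ => e i, ← Finset.mul_sum, ← hB]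
  have hsplit : ∑ x ∈ Finset.univ ×ˢ Finset.univ, H x
      = (∑ i : Fin d, H (i, i)) + ∑ x ∈ Finset.univ.offDiag, H x := by
    rw [← Finset.diag_union_offDiag Finset.univ,
      Finset.sum_union (Finset.disjoint_diag_offDiag _), Finset.sum_diag]
  rw [hfull, hdiag] at hsplit
  rw [hSAB] at hsplit
  linarith

/-- For a Hermitian operator `Q` and a density operator `ρ` (positive
semidefinite, trace one) on a finite-dimensional complex Hilbert space,
`Tr(Q²) + (Tr(ρQ))² ≥ 2 Tr(ρQ²)`. -/
theorem stmt0 {d : ℕ} (Q ρ : Matrix (Fin d) (Fin d) ℂ)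
    (hQ : Q.IsHermitian) (hρ : ρ.PosSemidef) (hρtr : ρ.trace = 1) :
    ((Q * Q).trace.re) + ((ρ * Q).trace.re) ^ 2 ≥ 2 * ((ρ * (Q * Q)).trace.re) := by
  classical
  set q : Fin d → ℝ := hQ.eigenvalues with hq
  set U : Matrix (Fin d) (Fin d) ℂ := (hQ.eigenvectorUnitary : Matrix (Fin d) (Fin d) ℂ) with hUdef
  have hUmem : U ∈ Matrix.unitaryGroup (Fin d) ℂ := hQ.eigenvectorUnitary.2
  have hU1 : star U * U = 1 := Matrix.UnitaryGroup.star_mul_self ⟨U, hUmem⟩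
  have hU2 : U * star U = 1 := by rw [mul_eq_one_comm.mpr hU1]
  set D : Matrix (Fin d) (Fin d) ℂ := Matrix.diagonal (fun i => (q i : ℂ)) with hDdef
  have hQd : Q = U * D * star U := by
    have := hQ.spectral_theorem
    rw [Unitary.conjStarAlgAut_apply] at this
    exact this
  set σ : Matrix (Fin d) (Fin d) ℂ := star U * ρ * U with hσdef
  have hσ : σ.PosSemidef := by
    rw [hσdef, Matrix.star_eq_conjTranspose]
    exact hρ.conjTranspose_mul_mul_same U
  have hdiagσ : ∀ i, 0 ≤ σ i i := fun i => by
    have h := hσ.diag_nonneg (i := i)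
    simpa [dotProduct, Matrix.mulVec, Pi.single_apply] using h
  set p : Fin d → ℝ := fun i => (σ i i).re with hpdef
  have hp : ∀ i, 0 ≤ p i := fun i => (Complex.nonneg_iff.mp (hdiagσ i)).1
  have him : ∀ i, (σ i i).im = 0 := fun i => ((Complex.nonneg_iff.mp (hdiagσ i)).2).symm
  have hσtr : σ.trace = 1 := by
    rw [hσdef, Matrix.trace_mul_cycle, hU2, one_mul, hρtr]
  have hps : ∑ i, p i = 1 := by
    have := congrArg Complex.re hσtr
    rw [Matrix.trace, Complex.re_sum] at this
    simpa [Matrix.diag] using this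
  have hcancel : star U * (U * (D * star U)) = D * star U := by
    rw [← mul_assoc, hU1, one_mul]
  have hQQ : Q * Q = U * (D * D) * star U := by
    rw [hQd]
    simp only [mul_assoc]
    rw [hcancel]
  have hDD : D * D = Matrix.diagonal (fun i => ((q i : ℂ))^2) := by
    rw [hDdef, Matrix.diagonal_mul_diagonal]
    exact congrArg _ (funext fun i => (sq (q i : ℂ)).symm)
  have htrQQ : (Q * Q).trace = ∑ i, ((q i : ℂ))^2 := by
    rw [hQQ, Matrix.trace_mul_cycle, ← mul_assoc, hU1, one_mul, hDD, Matrix.trace_diagonal]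
  have htrρQ : (ρ * Q).trace = ∑ i, σ i i * (q i : ℂ) := by
    rw [hQd, show ρ * (U * D * star U) = (ρ * U * D) * star U by simp only [mul_assoc],
      Matrix.trace_mul_comm, show star U * (ρ * U * D) = σ * D by
        rw [hσdef]; simp only [mul_assoc], Matrix.trace]
    simp [Matrix.diag, hDdef, Matrix.mul_diagonal]
  have htrρQQ : (ρ * (Q * Q)).trace = ∑ i, σ i i * ((q i : ℂ))^2 := by
    rw [hQQ, show ρ * (U * (D * D) * star U) = (ρ * U * (D * D)) * star U by
        simp only [mul_assoc],
      Matrix.trace_mul_comm, show star U * (ρ * U * (D * D)) = σ * (D * D) by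
        rw [hσdef]; simp only [mul_assoc], hDD, Matrix.trace]
    simp [Matrix.diag, Matrix.mul_diagonal]
  have hre1 : (Q * Q).trace.re = ∑ i, (q i)^2 := by
    rw [htrQQ, Complex.re_sum]
    exact Finset.sum_congr rfl fun i _ => by rw [← Complex.ofReal_pow, Complex.ofReal_re]
  have hre2 : (ρ * Q).trace.re = ∑ i, p i * q i := by
    rw [htrρQ, Complex.re_sum]
    exact Finset.sum_congr rfl fun i _ => by
      simp [Complex.mul_re, him i, hpdef]
  have hre3 : (ρ * (Q * Q)).trace.re = ∑ i, p i * (q i)^2 := by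
    rw [htrρQQ, Complex.re_sum]
    refine Finset.sum_congr rfl fun i _ => ?_
    rw [show ((q i : ℂ))^2 = ((q i ^ 2 : ℝ) : ℂ) by push_cast; ring,
      Complex.mul_re, Complex.ofReal_re, Complex.ofReal_im, mul_zero, sub_zero, hpdef]
  rw [hre1, hre2, hre3]
  exact key_scalar p q hp hps
end

section
/- Let ρ and σ be density operators on a finite-dimensional complex Hilbert space and let Δ = ρ − σ. Then ‖Δ‖₁² ≥ 2‖Δ‖₂², where ‖·‖₁ is the trace norm and ‖·‖₂ is the Hilbert–Schmidt (Frobenius) norm. Moreover, equality holds if and only if rank(Δ) ≤ 2. -/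
open Finset

-- off-diagonal decomposition of square of sum
lemma sq_sum_decomp {d : ℕ} (f : Fin d → ℝ) :
    (∑ i, f i) ^ 2 = (∑ i, f i ^ 2) + ∑ i, ∑ j ∈ univ.erase i, f i * f j := by
  rw [sq, Finset.sum_mul_sum, ← Finset.sum_add_distrib]
  refine Finset.sum_congr rfl fun i _ => ?_
  rw [sq, Finset.add_sum_erase _ (fun j => f i * f j) (mem_univ i)]

lemma offdiag_nonneg {d : ℕ} (f : Fin d → ℝ) (hf : ∀ i, 0 ≤ f i) :
    0 ≤ ∑ i, ∑ j ∈ univ.erase i, f i * f j := by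
  refine Finset.sum_nonneg fun i _ => Finset.sum_nonneg fun j _ => mul_nonneg (hf i) (hf j)

lemma offdiag_eq_zero_iff {d : ℕ} (f : Fin d → ℝ) (hf : ∀ i, 0 ≤ f i) :
    (∑ i, ∑ j ∈ univ.erase i, f i * f j) = 0 ↔ ∀ i j, i ≠ j → f i * f j = 0 := by
  rw [Finset.sum_eq_zero_iff_of_nonneg
    (fun i _ => Finset.sum_nonneg fun j _ => mul_nonneg (hf i) (hf j))]
  constructor
  · intro h i j hij
    have := h i (mem_univ i)
    rw [Finset.sum_eq_zero_iff_of_nonneg (fun j _ => mul_nonneg (hf i) (hf j))] at this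
    exact this j (Finset.mem_erase.mpr ⟨hij.symm, mem_univ j⟩)
  · intro h i _
    refine Finset.sum_eq_zero fun j hj => h i j ?_
    exact fun e => (Finset.mem_erase.mp hj).1 e.symm

lemma real_key {d : ℕ} (f : Fin d → ℝ) (h0 : ∑ i, f i = 0) :
    2 * (∑ i, f i ^ 2) ≤ (∑ i, |f i|) ^ 2 ∧
    ((∑ i, |f i|) ^ 2 = 2 * (∑ i, f i ^ 2) ↔
      (univ.filter (fun i => f i ≠ 0)).card ≤ 2) := by
  classical
  set a : Fin d → ℝ := fun i => max (f i) 0 with ha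
  set b : Fin d → ℝ := fun i => max (-f i) 0 with hb
  have hann : ∀ i, 0 ≤ a i := fun i => le_max_right _ _
  have hbnn : ∀ i, 0 ≤ b i := fun i => le_max_right _ _
  have habs : ∀ i, |f i| = a i + b i := by
    intro i; rcases le_total (f i) 0 with h | h
    · simp [ha, hb, abs_of_nonpos h, max_eq_right h, max_eq_left (neg_nonneg.mpr h)]
    · simp [ha, hb, abs_of_nonneg h, max_eq_left h, max_eq_right (neg_nonpos.mpr h)]
  have hsub : ∀ i, f i = a i - b i := by
    intro i; rcases le_total (f i) 0 with h | h
    · simp [ha, hb, max_eq_right h, max_eq_left (neg_nonneg.mpr h)]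
    · simp [ha, hb, max_eq_left h, max_eq_right (neg_nonpos.mpr h)]
  have hsq : ∀ i, f i ^ 2 = a i ^ 2 + b i ^ 2 := by
    intro i; rcases le_total (f i) 0 with h | h
    · simp [ha, hb, max_eq_right h, max_eq_left (neg_nonneg.mpr h)]
    · simp [ha, hb, max_eq_left h, max_eq_right (neg_nonpos.mpr h)]
  have hab : ∑ i, a i = ∑ i, b i := by
    have h1 : ∑ i, (a i - b i) = ∑ i, f i := Finset.sum_congr rfl fun i _ => (hsub i).symm
    rw [h0, Finset.sum_sub_distrib] at h1; linarith
  set Ra := ∑ i, ∑ j ∈ univ.erase i, a i * a j with hRa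
  set Rb := ∑ i, ∑ j ∈ univ.erase i, b i * b j with hRb
  have hRann : 0 ≤ Ra := offdiag_nonneg a hann
  have hRbnn : 0 ≤ Rb := offdiag_nonneg b hbnn
  have key : (∑ i, |f i|) ^ 2 = 2 * (∑ i, f i ^ 2) + 2 * Ra + 2 * Rb := by
    have e1 : ∑ i, |f i| = (∑ i, a i) + (∑ i, b i) := by
      rw [← Finset.sum_add_distrib]; exact Finset.sum_congr rfl fun i _ => habs i
    have e2 : ∑ i, f i ^ 2 = (∑ i, a i ^ 2) + (∑ i, b i ^ 2) := by
      rw [← Finset.sum_add_distrib]; exact Finset.sum_congr rfl fun i _ => hsq i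
    have da := sq_sum_decomp a
    have db := sq_sum_decomp b
    rw [← hRa] at da
    rw [← hRb] at db
    have hab2 : (∑ i, a i) ^ 2 = (∑ i, b i) ^ 2 := by rw [hab]
    rw [e1, e2, ← hab]
    nlinarith [da, db, hab2]
  constructor
  · nlinarith
  rw [key]
  have heq : 2 * (∑ i, f i ^ 2) + 2 * Ra + 2 * Rb = 2 * (∑ i, f i ^ 2) ↔ Ra = 0 ∧ Rb = 0 :=
    ⟨fun h => ⟨by linarith, by linarith⟩, fun ⟨h1, h2⟩ => by linarith⟩
  rw [heq, offdiag_eq_zero_iff a hann, offdiag_eq_zero_iff b hbnn]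
  constructor
  · rintro ⟨hA, hB⟩
    have hP : (univ.filter (fun i => 0 < f i)).card ≤ 1 := by
      rw [Finset.card_le_one]
      intro i hi j hj
      by_contra hij
      have := hA i j hij
      simp only [Finset.mem_filter] at hi hj
      have : a i * a j > 0 := mul_pos (by simpa [ha, max_eq_left hi.2.le] using hi.2)
        (by simpa [ha, max_eq_left hj.2.le] using hj.2)
      linarith [hA i j hij]
    have hN : (univ.filter (fun i => f i < 0)).card ≤ 1 := by
      rw [Finset.card_le_one]
      intro i hi j hj
      by_contra hij
      simp only [Finset.mem_filter] at hi hj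
      have : b i * b j > 0 := mul_pos
        (by simpa [hb, max_eq_left (neg_nonneg.mpr hi.2.le)] using neg_pos.mpr hi.2)
        (by simpa [hb, max_eq_left (neg_nonneg.mpr hj.2.le)] using neg_pos.mpr hj.2)
      linarith [hB i j hij]
    have hsubset : (univ.filter (fun i => f i ≠ 0)) ⊆
        (univ.filter (fun i => 0 < f i)) ∪ (univ.filter (fun i => f i < 0)) := by
      intro i hi
      simp only [Finset.mem_filter, Finset.mem_union] at hi ⊢
      rcases lt_or_gt_of_ne hi.2 with h | h
      · exact Or.inr ⟨hi.1, h⟩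
      · exact Or.inl ⟨hi.1, h⟩
    calc (univ.filter (fun i => f i ≠ 0)).card ≤ _ := Finset.card_le_card hsubset
      _ ≤ _ := Finset.card_union_le _ _
      _ ≤ 2 := by omega
  · intro hcard
    constructor
    · intro i j hij
      by_contra hne
      have hai : 0 < a i := lt_of_le_of_ne (hann i) fun e => hne (by rw [← e]; ring)
      have haj : 0 < a j := by
        rcases lt_or_eq_of_le (hann j) with h | h
        · exact h
        · exact absurd (by rw [← h]; ring) hne
      have hfi : 0 < f i := by simpa [ha, lt_max_iff, lt_irrefl] using hai
      have hfj : 0 < f j := by simpa [ha, lt_max_iff, lt_irrefl] using haj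
      have hmem : ({i, j} : Finset (Fin d)) ⊆ univ.filter (fun k => f k ≠ 0) := by
        intro k hk
        simp only [Finset.mem_insert, Finset.mem_singleton] at hk
        rcases hk with rfl | rfl <;> simp [Finset.mem_filter, hfi.ne', hfj.ne']
      have hcard2 : ({i, j} : Finset (Fin d)).card = 2 := Finset.card_pair hij
      have heqset : univ.filter (fun k => f k ≠ 0) = {i, j} :=
        (Finset.eq_of_subset_of_card_le hmem (by omega)).symm
      have : ∑ k ∈ univ.filter (fun k => f k ≠ 0), f k = ∑ k, f k :=
        Finset.sum_filter_ne_zero _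
      rw [heqset, Finset.sum_pair hij, h0] at this
      linarith
    · intro i j hij
      by_contra hne
      have hbi : 0 < b i := lt_of_le_of_ne (hbnn i) fun e => hne (by rw [← e]; ring)
      have hbj : 0 < b j := by
        rcases lt_or_eq_of_le (hbnn j) with h | h
        · exact h
        · exact absurd (by rw [← h]; ring) hne
      have hfi : f i < 0 := by
        have := hbi; simp only [hb, lt_max_iff, lt_irrefl, or_false] at this; linarith
      have hfj : f j < 0 := by
        have := hbj; simp only [hb, lt_max_iff, lt_irrefl, or_false] at this; linarith
      have hmem : ({i, j} : Finset (Fin d)) ⊆ univ.filter (fun k => f k ≠ 0) := by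
        intro k hk
        simp only [Finset.mem_insert, Finset.mem_singleton] at hk
        rcases hk with rfl | rfl <;> simp [Finset.mem_filter, hfi.ne, hfj.ne]
      have hcard2 : ({i, j} : Finset (Fin d)).card = 2 := Finset.card_pair hij
      have heqset : univ.filter (fun k => f k ≠ 0) = {i, j} :=
        (Finset.eq_of_subset_of_card_le hmem (by omega)).symm
      have : ∑ k ∈ univ.filter (fun k => f k ≠ 0), f k = ∑ k, f k :=
        Finset.sum_filter_ne_zero _
      rw [heqset, Finset.sum_pair hij, h0] at this
      linarith

lemma trace_eq_sum_eigs {d : ℕ} {A : Matrix (Fin d) (Fin d) ℂ} (hA : A.IsHermitian) :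
    A.trace = ∑ i, (hA.eigenvalues i : ℂ) := by
  conv_lhs => rw [hA.spectral_theorem, Unitary.conjStarAlgAut_apply]
  rw [Matrix.trace_mul_cycle]
  rw [show (star (hA.eigenvectorUnitary : Matrix (Fin d) (Fin d) ℂ)) *
      (hA.eigenvectorUnitary : Matrix (Fin d) (Fin d) ℂ) = 1 from
    Unitary.coe_star_mul_self hA.eigenvectorUnitary, one_mul, Matrix.trace_diagonal]
  rfl

lemma trace_sq_eq_sum_eigs_sq {d : ℕ} {A : Matrix (Fin d) (Fin d) ℂ} (hA : A.IsHermitian) :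
    (A * A).trace = ∑ i, (hA.eigenvalues i : ℂ) ^ 2 := by
  have hU : (star (hA.eigenvectorUnitary : Matrix (Fin d) (Fin d) ℂ)) *
      (hA.eigenvectorUnitary : Matrix (Fin d) (Fin d) ℂ) = 1 :=
    Unitary.coe_star_mul_self hA.eigenvectorUnitary
  conv_lhs => rw [hA.spectral_theorem, Unitary.conjStarAlgAut_apply]
  rw [show ((hA.eigenvectorUnitary : Matrix (Fin d) (Fin d) ℂ) *
        Matrix.diagonal (RCLike.ofReal ∘ hA.eigenvalues) *
        (star (hA.eigenvectorUnitary : Matrix (Fin d) (Fin d) ℂ))) *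
      ((hA.eigenvectorUnitary : Matrix (Fin d) (Fin d) ℂ) *
        Matrix.diagonal (RCLike.ofReal ∘ hA.eigenvalues) *
        (star (hA.eigenvectorUnitary : Matrix (Fin d) (Fin d) ℂ))) =
      (hA.eigenvectorUnitary : Matrix (Fin d) (Fin d) ℂ) *
        (Matrix.diagonal (RCLike.ofReal ∘ hA.eigenvalues) *
         Matrix.diagonal (RCLike.ofReal ∘ hA.eigenvalues)) *
        (star (hA.eigenvectorUnitary : Matrix (Fin d) (Fin d) ℂ)) by
      simp only [Matrix.mul_assoc]
      rw [← Matrix.mul_assoc (star (hA.eigenvectorUnitary : Matrix (Fin d) (Fin d) ℂ)), hU,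
        one_mul]]
  rw [Matrix.trace_mul_cycle, ← Matrix.mul_assoc, hU, one_mul,
    Matrix.diagonal_mul_diagonal, Matrix.trace_diagonal]
  refine Finset.sum_congr rfl fun i _ => ?_
  simp [sq]

open scoped ComplexOrder

/-- For density operators `ρ, σ` and `Δ = ρ − σ`,
`‖Δ‖₁² ≥ 2‖Δ‖₂²` (trace norm vs Hilbert–Schmidt norm), with equality
iff `rank Δ ≤ 2`. The trace norm is the sum of absolute values of the
eigenvalues and `‖Δ‖₂² = Tr(Δ²)`. -/
theorem stmt1 {d : ℕ} (ρ σ : Matrix (Fin d) (Fin d) ℂ)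
    (hρ : ρ.PosSemidef) (hσ : σ.PosSemidef)
    (hρtr : ρ.trace = 1) (hσtr : σ.trace = 1)
    (hΔ : (ρ - σ).IsHermitian) :
    (∑ i, |hΔ.eigenvalues i|) ^ 2 ≥ 2 * ((ρ - σ) * (ρ - σ)).trace.re ∧
    ((∑ i, |hΔ.eigenvalues i|) ^ 2 = 2 * ((ρ - σ) * (ρ - σ)).trace.re ↔
      (ρ - σ).rank ≤ 2) := by
  classical
  set f := hΔ.eigenvalues with hf
  have h0 : ∑ i, f i = 0 := by
    have h1 : (ρ - σ).trace = 0 := by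
      rw [Matrix.trace_sub, hρtr, hσtr, sub_self]
    have h2 := trace_eq_sum_eigs hΔ
    rw [h1] at h2
    have : ((∑ i, f i : ℝ) : ℂ) = 0 := by push_cast; rw [← h2]
    exact_mod_cast this
  have htr : ((ρ - σ) * (ρ - σ)).trace.re = ∑ i, f i ^ 2 := by
    rw [trace_sq_eq_sum_eigs_sq hΔ]
    rw [Complex.re_sum]
    refine Finset.sum_congr rfl fun i _ => ?_
    rw [← Complex.ofReal_pow, Complex.ofReal_re]
  have hrank : (ρ - σ).rank ≤ 2 ↔ (Finset.univ.filter (fun i => f i ≠ 0)).card ≤ 2 := by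
    rw [hΔ.rank_eq_card_non_zero_eigs, Fintype.card_subtype]
  obtain ⟨hle, hiff⟩ := real_key f h0
  rw [htr, hrank]
  exact ⟨hle, hiff⟩
end

section
/- Let Δ be a traceless Hermitian d×d matrix with at most one negative eigenvalue (e.g. Δ = ρ − σ with ρ a density matrix and σ a rank-one projection). Then ‖Δ‖₁² ≤ 4(d−1)/d · ‖Δ‖₂², i.e. ‖Δ‖₂² ≥ d/(4(d−1)) · ‖Δ‖₁². -/
lemma trace_sq_eq {d : ℕ} (Δ : Matrix (Fin d) (Fin d) ℂ) (hΔ : Δ.IsHermitian) :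
    (Δ * Δ).trace = ∑ i, ((hΔ.eigenvalues i : ℂ)) ^ 2 := by
  set U := (hΔ.eigenvectorUnitary : Matrix (Fin d) (Fin d) ℂ)
  set D := Matrix.diagonal (RCLike.ofReal ∘ hΔ.eigenvalues : Fin d → ℂ)
  have hU : (star U) * U = 1 := Matrix.mem_unitaryGroup_iff'.mp hΔ.eigenvectorUnitary.2
  have h := hΔ.spectral_theorem
  have : Δ * Δ = U * (D * D) * star U := by
    rw [h]; simp only [Unitary.conjStarAlgAut_apply, Matrix.mul_assoc]
    rw [← Matrix.mul_assoc (star U) U, hU, Matrix.one_mul]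
  rw [this, Matrix.trace_mul_cycle, ← Matrix.mul_assoc, hU, Matrix.one_mul]
  simp [D, Matrix.diagonal_mul_diagonal, Matrix.trace_diagonal, sq]

lemma trace_eq {d : ℕ} (Δ : Matrix (Fin d) (Fin d) ℂ) (hΔ : Δ.IsHermitian) :
    Δ.trace = ∑ i, ((hΔ.eigenvalues i : ℂ)) := by
  set U := (hΔ.eigenvectorUnitary : Matrix (Fin d) (Fin d) ℂ)
  set D := Matrix.diagonal (RCLike.ofReal ∘ hΔ.eigenvalues : Fin d → ℂ)
  have hU : (star U) * U = 1 := Matrix.mem_unitaryGroup_iff'.mp hΔ.eigenvectorUnitary.2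
  conv_lhs => rw [hΔ.spectral_theorem, Unitary.conjStarAlgAut_apply]
  rw [Matrix.trace_mul_cycle, hU, Matrix.one_mul]
  simp [D, Matrix.trace_diagonal]

/-- If `Δ` is a traceless Hermitian `d×d` matrix with at most one
negative eigenvalue, then `‖Δ‖₁² ≤ 4(d−1)/d · ‖Δ‖₂²`, where `‖Δ‖₁` is the sum of
the absolute values of the eigenvalues and `‖Δ‖₂² = Tr(Δ²)`. -/
theorem stmt2 {d : ℕ} (hd : 0 < d) (Δ : Matrix (Fin d) (Fin d) ℂ)
    (hΔ : Δ.IsHermitian) (htr : Δ.trace = 0)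
    (hneg : ∃ j, ∀ i, i ≠ j → 0 ≤ hΔ.eigenvalues i) :
    (∑ i, |hΔ.eigenvalues i|) ^ 2 ≤ 4 * ((d : ℝ) - 1) / d * ((Δ * Δ).trace.re) := by
  obtain ⟨j, hj⟩ := hneg
  set μ := hΔ.eigenvalues with hμ
  -- sum of eigenvalues is zero
  have hsum : ∑ i, μ i = 0 := by
    have := trace_eq Δ hΔ
    rw [htr] at this
    have h2 : ((∑ i, μ i : ℝ) : ℂ) = 0 := by push_cast; rw [← this]
    exact_mod_cast h2
  -- trace of square
  have htr2 : (Δ * Δ).trace.re = ∑ i, (μ i) ^ 2 := by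
    rw [trace_sq_eq Δ hΔ]
    simp [← Complex.ofReal_pow, ← Complex.ofReal_sum]
    rfl
  set S : ℝ := ∑ i ∈ Finset.univ.erase j, μ i with hS
  have hSnonneg : 0 ≤ S := Finset.sum_nonneg fun i hi => hj i (Finset.ne_of_mem_erase hi)
  have hμj : μ j = -S := by
    have := Finset.add_sum_erase Finset.univ μ (Finset.mem_univ j)
    rw [hsum] at this
    linarith
  have habs : ∑ i, |μ i| = 2 * S := by
    rw [← Finset.add_sum_erase Finset.univ (fun i => |μ i|) (Finset.mem_univ j)]
    have : ∑ i ∈ Finset.univ.erase j, |μ i| = S := by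
      apply Finset.sum_congr rfl
      intro i hi
      exact abs_of_nonneg (hj i (Finset.ne_of_mem_erase hi))
    rw [this, hμj, abs_neg, abs_of_nonneg hSnonneg]
    ring
  set T : ℝ := ∑ i ∈ Finset.univ.erase j, (μ i) ^ 2 with hT
  have hCS : S ^ 2 ≤ ((d : ℝ) - 1) * T := by
    have := sq_sum_le_card_mul_sum_sq (s := Finset.univ.erase j) (f := μ)
    have hcard : (Finset.univ.erase j).card = d - 1 := by
      simp [Finset.card_erase_of_mem]
    rw [hcard] at this
    have hcast : ((d - 1 : ℕ) : ℝ) = (d : ℝ) - 1 := by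
      have : 1 ≤ d := hd
      push_cast [Nat.cast_sub this]
      ring
    calc S ^ 2 ≤ ((d - 1 : ℕ) : ℝ) * T := this
      _ = ((d : ℝ) - 1) * T := by rw [hcast]
  have hsq : ∑ i, (μ i) ^ 2 = S ^ 2 + T := by
    rw [← Finset.add_sum_erase Finset.univ (fun i => (μ i) ^ 2) (Finset.mem_univ j), hμj]
    ring
  have hTnonneg : 0 ≤ T := Finset.sum_nonneg fun i _ => sq_nonneg _
  rw [habs, htr2, hsq]
  have hdR : (1 : ℝ) ≤ d := by exact_mod_cast hd
  rw [div_mul_eq_mul_div, le_div_iff₀ (by linarith)]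
  nlinarith [hCS, hSnonneg, hTnonneg, sq_nonneg S]
end

section
/- Let σ be a rank-one orthogonal projection (pure state) and ρ a density operator on a d-dimensional complex Hilbert space; set ε = 1 − Tr(ρσ) and Δ = ρ − σ. Then ‖Δ‖₂² ≥ (d/(d−1)) ε², with equality if and only if ρ = (1−ε)σ + ε(1−σ)/(d−1). -/
open scoped ComplexOrder

open Matrix in
lemma trace_conjT_mul_self_re {n : ℕ} (M : Matrix (Fin n) (Fin n) ℂ) :
    (Mᴴ * M).trace.re = ∑ i, ∑ j, Complex.normSq (M j i) := by
  simp [Matrix.trace, Matrix.diag, Matrix.mul_apply, Matrix.conjTranspose_apply,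
    Complex.re_sum, ← Complex.normSq_eq_conj_mul_self]

open Matrix in
lemma trace_conjT_mul_self_re_nonneg {n : ℕ} (M : Matrix (Fin n) (Fin n) ℂ) :
    0 ≤ (Mᴴ * M).trace.re := by
  rw [trace_conjT_mul_self_re]
  exact Finset.sum_nonneg fun i _ => Finset.sum_nonneg fun j _ => Complex.normSq_nonneg _

open Matrix in
lemma trace_conjT_mul_self_re_eq_zero {n : ℕ} (M : Matrix (Fin n) (Fin n) ℂ) :
    (Mᴴ * M).trace.re = 0 ↔ M = 0 := by
  rw [trace_conjT_mul_self_re]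
  constructor
  · intro h
    ext j i
    have h1 := (Finset.sum_eq_zero_iff_of_nonneg
      (fun i _ => Finset.sum_nonneg fun j _ => Complex.normSq_nonneg _)).mp h i
      (Finset.mem_univ _)
    have h2 := (Finset.sum_eq_zero_iff_of_nonneg
      (fun j _ => Complex.normSq_nonneg _)).mp h1 j (Finset.mem_univ _)
    simpa using Complex.normSq_eq_zero.mp h2
  · intro h; simp [h]

/-- For a rank-one orthogonal projection (pure state) `σ` and a density
operator `ρ` on a `d`-dimensional complex Hilbert space, with `ε = 1 − Tr(ρσ)` and
`Δ = ρ − σ`, one has `‖Δ‖₂² ≥ (d/(d−1)) ε²`, with equality iff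
`ρ = (1−ε)σ + ε(1−σ)/(d−1)`. -/
theorem stmt3 {d : ℕ} (hd : 2 ≤ d) (σ ρ : Matrix (Fin d) (Fin d) ℂ)
    (hσH : σ.IsHermitian) (hσ2 : σ * σ = σ) (hσtr : σ.trace = 1)
    (hρ : ρ.PosSemidef) (hρtr : ρ.trace = 1)
    (ε : ℝ) (hε : ε = 1 - ((ρ * σ).trace.re)) :
    ((ρ - σ) * (ρ - σ)).trace.re ≥ ((d : ℝ) / (d - 1)) * ε ^ 2 ∧
    (((ρ - σ) * (ρ - σ)).trace.re = ((d : ℝ) / (d - 1)) * ε ^ 2 ↔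
      ρ = ((1 - ε : ℝ) : ℂ) • σ + ((ε / ((d : ℝ) - 1) : ℝ) : ℂ) • (1 - σ)) := by
  have hρH : ρ.IsHermitian := hρ.1
  have hd2 : (2:ℝ) ≤ (d:ℝ) := by exact_mod_cast hd
  have hd0 : ((d:ℝ) - 1) ≠ 0 := by linarith
  have hd0c : ((d:ℂ) - 1) ≠ 0 := by
    intro h
    apply hd0
    have : ((d:ℝ) - 1 : ℂ) = 0 := by push_cast; exact_mod_cast h
    exact_mod_cast this
  have hs : (ρ * σ).trace = (((1 - ε : ℝ)) : ℂ) := by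
    have h1 : (starRingEnd ℂ) ((ρ * σ).trace) = (ρ * σ).trace := by
      have := Matrix.trace_conjTranspose (ρ * σ)
      rw [Matrix.conjTranspose_mul, hρH.eq, hσH.eq, Matrix.trace_mul_comm] at this
      exact this.symm
    have h2 : ((ρ*σ).trace.re : ℂ) = (ρ*σ).trace := Complex.conj_eq_iff_re.mp h1
    rw [← h2, hε]; push_cast; ring
  set M : Matrix (Fin d) (Fin d) ℂ :=
    ρ - ((1 - ε : ℝ) : ℂ) • σ - ((ε / ((d:ℝ) - 1) : ℝ) : ℂ) • (1 - σ) with hM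
  have hMH : M.conjTranspose = M := by
    simp [hM, Matrix.conjTranspose_sub, Matrix.conjTranspose_smul, hρH.eq, hσH.eq,
      Matrix.conjTranspose_one, Complex.star_def, Complex.conj_ofReal]
  have heqM : M = 0 ↔ ρ = ((1 - ε : ℝ) : ℂ) • σ + ((ε / ((d:ℝ) - 1) : ℝ) : ℂ) • (1 - σ) := by
    rw [hM, sub_sub, sub_eq_zero]
  have htr1 : (1 : Matrix (Fin d) (Fin d) ℂ).trace = (d : ℂ) := by
    simp [Matrix.trace_one]
  have hσρ : (σ * ρ).trace = (ρ * σ).trace := Matrix.trace_mul_comm σ ρ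
  have key : ((ρ - σ) * (ρ - σ)).trace
      = (M * M).trace + ((((d:ℝ)/((d:ℝ)-1)) * ε^2 : ℝ) : ℂ) := by
    simp only [hM, sub_mul, mul_sub, smul_mul_assoc, mul_smul_comm, mul_one, one_mul,
      Matrix.trace_sub, Matrix.trace_smul, smul_smul, smul_eq_mul, hσ2]
    simp only [hσρ, hs, hρtr, hσtr, htr1, smul_eq_mul]
    push_cast
    field_simp
    ring
  have hre : ((ρ - σ) * (ρ - σ)).trace.re
      = (M*M).trace.re + (d:ℝ)/((d:ℝ)-1) * ε^2 := by
    rw [key, Complex.add_re, Complex.ofReal_re]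
  have hnn : 0 ≤ (M*M).trace.re := by
    have := trace_conjT_mul_self_re_nonneg M
    rwa [hMH] at this
  constructor
  · rw [hre]; linarith
  · rw [hre, add_eq_right]
    rw [← heqM]
    nth_rewrite 1 [← hMH]
    exact trace_conjT_mul_self_re_eq_zero M
end

section
/- Let σ be a rank-one orthogonal projection and ρ a density operator on a d-dimensional complex Hilbert space with ε = 1 − Tr(ρσ). Then Tr(ρ²) ≥ (1−ε)² + ε²/(d−1). -/
open scoped ComplexOrder
open Matrix

lemma aux_tr_nonneg {n : Type*} [Fintype n] (A : Matrix n n ℂ) :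
    0 ≤ (Aᴴ * A).trace.re := by
  rw [Matrix.trace, Complex.re_sum]
  refine Finset.sum_nonneg fun i _ => ?_
  rw [Matrix.diag_apply, Matrix.mul_apply, Complex.re_sum]
  refine Finset.sum_nonneg fun j _ => ?_
  simp only [Matrix.conjTranspose_apply]
  rw [show (star (A j i) * A j i) = ((Complex.normSq (A j i) : ℝ) : ℂ) by
    simp [Complex.star_def, Complex.normSq_eq_conj_mul_self]]
  simp [Complex.normSq_nonneg]

/-- For a rank-one orthogonal projection `σ` and a density operator `ρ`
on a `d`-dimensional complex Hilbert space (`d ≥ 2`), with `ε = 1 − Tr(ρσ)`, the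
purity satisfies `Tr(ρ²) ≥ (1−ε)² + ε²/(d−1)`. -/
theorem stmt7 {d : ℕ} (hd : 2 ≤ d) (σ ρ : Matrix (Fin d) (Fin d) ℂ)
    (hσH : σ.IsHermitian) (hσ2 : σ * σ = σ) (hσtr : σ.trace = 1)
    (hρ : ρ.PosSemidef) (hρtr : ρ.trace = 1)
    (ε : ℝ) (hε : ε = 1 - ((ρ * σ).trace.re)) :
    (ρ * ρ).trace.re ≥ (1 - ε) ^ 2 + ε ^ 2 / ((d : ℝ) - 1) := by
  set a : ℝ := 1 - ε with ha
  set b : ℝ := ε / ((d : ℝ) - 1) with hb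
  set A : Matrix (Fin d) (Fin d) ℂ := ρ - (a : ℂ) • σ - (b : ℂ) • (1 - σ) with hA
  have hAH : Aᴴ = A := by
    simp [hA, Matrix.conjTranspose_sub, Matrix.conjTranspose_smul,
      hσH.eq, hρ.isHermitian.eq, Matrix.conjTranspose_one, Complex.star_def,
      Complex.conj_ofReal]
  have h0 : 0 ≤ (Aᴴ * A).trace.re := aux_tr_nonneg A
  rw [hAH] at h0
  have hexp : (A * A).trace = (ρ * ρ).trace - ((2 * a : ℝ) : ℂ) * (ρ * σ).trace
      - ((2 * b : ℝ) : ℂ) * (1 - (ρ * σ).trace)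
      + ((a ^ 2 + b ^ 2 * ((d : ℝ) - 1) : ℝ) : ℂ) := by
    have hcomm : (σ * ρ).trace = (ρ * σ).trace := Matrix.trace_mul_comm σ ρ
    simp only [hA, Matrix.sub_mul, Matrix.mul_sub, Matrix.smul_mul, Matrix.mul_smul,
      Matrix.one_mul, Matrix.mul_one, hσ2, smul_smul, Matrix.trace_sub, Matrix.trace_smul,
      Matrix.trace_one, hρtr, hσtr, hcomm, Fintype.card_fin, smul_eq_mul]
    push_cast
    ring
  have hre : (A * A).trace.re = (ρ * ρ).trace.re - (2 * a) * (ρ * σ).trace.re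
      - (2 * b) * (1 - (ρ * σ).trace.re)
      + (a ^ 2 + b ^ 2 * ((d : ℝ) - 1)) := by
    rw [hexp]
    simp [Complex.sub_re, Complex.add_re, Complex.re_ofReal_mul, Complex.ofReal_re,
      Complex.one_re, mul_sub, ← Complex.ofReal_pow]
  rw [hre] at h0
  have hc : (1 : ℝ) ≤ (d : ℝ) - 1 := by
    have : (2 : ℝ) ≤ (d : ℝ) := by exact_mod_cast hd
    linarith
  have hcne : ((d : ℝ) - 1) ≠ 0 := by linarith
  have hbe : b * ((d : ℝ) - 1) = ε := by rw [hb]; field_simp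
  have he2 : ε ^ 2 / ((d : ℝ) - 1) = ε * b := by
    rw [hb]; field_simp
  have hT : (ρ * σ).trace.re = 1 - ε := by linarith [hε]
  rw [hT] at h0
  rw [he2]
  have hbe2 : b * ε = b ^ 2 * ((d : ℝ) - 1) := by rw [hb]; field_simp
  have ha2 : a * (1 - ε) = a ^ 2 := by rw [ha]; ring
  linarith [h0, hbe2, ha2]
end

section
/- Let σ be a rank-one orthogonal projection and ρ a density operator on a finite-dimensional complex Hilbert space with ε = 1 − Tr(ρσ). If ρ commutes with σ, then Tr(ρ²) ≤ 1 − 2ε + 2ε², i.e. Tr(ρ²) ≤ (1−ε)² + ε². -/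
open scoped ComplexOrder
open scoped Matrix

lemma trace_sq_le_sq_trace {n : ℕ} {M : Matrix (Fin n) (Fin n) ℂ} (hM : M.PosSemidef) :
    ((M * M).trace.re) ≤ (M.trace.re) ^ 2 := by
  have hH := hM.isHermitian
  have hspec := hH.spectral_theorem
  rw [Unitary.conjStarAlgAut_apply] at hspec
  set U := (hH.eigenvectorUnitary : Matrix (Fin n) (Fin n) ℂ) with hU
  set D := Matrix.diagonal ((RCLike.ofReal ∘ hH.eigenvalues) : Fin n → ℂ) with hD
  have hUU : star U * U = 1 := (Unitary.mem_iff.mp hH.eigenvectorUnitary.prop).1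
  have htr : M.trace = ∑ i, (hH.eigenvalues i : ℂ) := by
    conv_lhs => rw [hspec]
    rw [Matrix.trace_mul_comm, ← Matrix.mul_assoc, hUU, one_mul, hD, Matrix.trace_diagonal]
    rfl
  have htr2 : (M * M).trace = ∑ i, (hH.eigenvalues i : ℂ) ^ 2 := by
    have : M * M = U * (D * D) * star U := by
      conv_lhs => rw [hspec]
      simp only [Matrix.mul_assoc]
      rw [← Matrix.mul_assoc (star U), hUU, one_mul]
    rw [this, Matrix.trace_mul_comm, ← Matrix.mul_assoc, hUU, one_mul, hD,
      Matrix.diagonal_mul_diagonal, Matrix.trace_diagonal]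
    simp [sq]
  have h1 : (M * M).trace.re = ∑ i, (hH.eigenvalues i) ^ 2 := by
    simp [htr2, ← Complex.ofReal_pow]
  have h2 : M.trace.re = ∑ i, hH.eigenvalues i := by
    rw [htr]; push_cast; simp
  rw [h1, h2]
  exact Finset.sum_sq_le_sq_sum_of_nonneg fun i _ => hM.eigenvalues_nonneg i

/-- For a rank-one orthogonal projection `σ` and a density operator `ρ`
with `ε = 1 − Tr(ρσ)`, if `ρ` commutes with `σ`, then `Tr(ρ²) ≤ 1 − 2ε + 2ε²`. -/
theorem stmt8 {d : ℕ} (σ ρ : Matrix (Fin d) (Fin d) ℂ)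
    (hσH : σ.IsHermitian) (hσ2 : σ * σ = σ) (hσtr : σ.trace = 1)
    (hρ : ρ.PosSemidef) (hρtr : ρ.trace = 1)
    (hcomm : ρ * σ = σ * ρ)
    (ε : ℝ) (hε : ε = 1 - ((ρ * σ).trace.re)) :
    (ρ * ρ).trace.re ≤ 1 - 2 * ε + 2 * ε ^ 2 := by
  have hAeq : σᴴ * ρ * σ = ρ * σ := by
    rw [hσH.eq, ← hcomm, Matrix.mul_assoc, hσ2]
  have hA : (ρ * σ).PosSemidef := hAeq ▸ hρ.conjTranspose_mul_mul_same σ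
  have hBeq : (1 - σ)ᴴ * ρ * (1 - σ) = ρ - ρ * σ := by
    have h3 : σ * ρ * σ = ρ * σ := by rw [← hcomm, Matrix.mul_assoc, hσ2]
    simp only [Matrix.conjTranspose_sub, Matrix.conjTranspose_one, hσH.eq,
      Matrix.sub_mul, Matrix.mul_sub, one_mul, mul_one, h3, ← hcomm,
      Matrix.mul_assoc, hσ2]
    abel
  have hB : (ρ - ρ * σ).PosSemidef := hBeq ▸ hρ.conjTranspose_mul_mul_same (1 - σ)
  have hsum : ρ * ρ = (ρ * σ) * (ρ * σ) + (ρ - ρ * σ) * (ρ - ρ * σ) := by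
    have h1 : (ρ * σ) * (ρ * σ) = ρ * ρ * σ := by
      rw [Matrix.mul_assoc, ← Matrix.mul_assoc σ, ← hcomm, Matrix.mul_assoc, hσ2,
        ← Matrix.mul_assoc]
    have h2 : (ρ * σ) * ρ = ρ * ρ * σ := by
      rw [Matrix.mul_assoc, ← hcomm, ← Matrix.mul_assoc]
    rw [Matrix.sub_mul, Matrix.mul_sub, Matrix.mul_sub, h1, h2, ← Matrix.mul_assoc]
    abel
  have hAle := trace_sq_le_sq_trace hA
  have hBle := trace_sq_le_sq_trace hB
  have htrB : (ρ - ρ * σ).trace.re = ε := by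
    rw [Matrix.trace_sub, Complex.sub_re, hρtr, hε]
    simp
  have htrA : (ρ * σ).trace.re = 1 - ε := by rw [hε]; ring
  rw [hsum, Matrix.trace_add, Complex.add_re]
  rw [htrA] at hAle
  rw [htrB] at hBle
  nlinarith [hAle, hBle]
end

section
/- Let A, B be traceless Hermitian operators on a d-dimensional complex Hilbert space and let W_π be the permutation operator on the 4-fold tensor power associated with any permutation π ∈ S₄. Then |Tr(W_π (A⊗B⊗A⊗B))| ≤ ‖A‖₂² ‖B‖₂². -/
/-- The permutation operator `W_π` on the 4-fold tensor power `(ℂ^d)^⊗4`, acting by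
`W_π (v₁⊗v₂⊗v₃⊗v₄) = v_{π⁻¹(1)} ⊗ v_{π⁻¹(2)} ⊗ v_{π⁻¹(3)} ⊗ v_{π⁻¹(4)}`, written as a
matrix with respect to the product basis indexed by `Fin 4 → Fin d`. -/
def permOp4 {d : ℕ} (π : Equiv.Perm (Fin 4)) :
    Matrix (Fin 4 → Fin d) (Fin 4 → Fin d) ℂ :=
  Matrix.of fun i j => if (∀ k, i k = j (π⁻¹ k)) then 1 else 0

/-- The tensor product `A ⊗ B ⊗ A ⊗ B` as a matrix on `(ℂ^d)^⊗4`, with the 4-fold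
tensor power identified with matrices indexed by `Fin 4 → Fin d`. -/
def tensABAB {d : ℕ} (A B : Matrix (Fin d) (Fin d) ℂ) :
    Matrix (Fin 4 → Fin d) (Fin 4 → Fin d) ℂ :=
  Matrix.of fun i j => A (i 0) (j 0) * B (i 1) (j 1) * A (i 2) (j 2) * B (i 3) (j 3)

open Finset

namespace Stmt11Aux

variable {d : ℕ}

def pi4equiv (d : ℕ) : (Fin d × Fin d × Fin d × Fin d) ≃ (Fin 4 → Fin d) where
  toFun p := ![p.1, p.2.1, p.2.2.1, p.2.2.2]
  invFun i := (i 0, i 1, i 2, i 3)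
  left_inv p := rfl
  right_inv i := by funext k; fin_cases k <;> rfl

lemma sum_pi4 (F : (Fin 4 → Fin d) → ℂ) :
    ∑ i, F i = ∑ a, ∑ b, ∑ c, ∑ e, F ![a, b, c, e] := by
  rw [← Equiv.sum_comp (pi4equiv d) F]
  simp only [Fintype.sum_prod_type]
  rfl

lemma herm_tr (A : Matrix (Fin d) (Fin d) ℂ) (hA : A.IsHermitian) :
    (A * A).trace.re = ∑ i, ∑ j, ‖A i j‖ ^ 2 := by
  have h : ∀ i j, A j i = (starRingEnd ℂ) (A i j) := by
    intro i j
    have := congrArg star (hA.apply i j)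
    simpa using this.symm.symm
  have htr : (A * A).trace = ∑ i, ∑ j, A i j * (starRingEnd ℂ) (A i j) := by
    rw [Matrix.trace]
    simp only [Matrix.diag, Matrix.mul_apply]
    exact Finset.sum_congr rfl fun i _ => Finset.sum_congr rfl fun j _ => by rw [← h i j]
  rw [htr]
  simp only [Complex.mul_conj, Complex.re_sum]
  simp [Complex.normSq_eq_norm_sq, ← Complex.ofReal_pow]


lemma trace_eq (A B : Matrix (Fin d) (Fin d) ℂ) (π : Equiv.Perm (Fin 4)) :
    (permOp4 (d := d) π * tensABAB A B).trace =
      ∑ a, ∑ b, ∑ c, ∑ e,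
        A (![a,b,c,e] (π 0)) a * B (![a,b,c,e] (π 1)) b *
          A (![a,b,c,e] (π 2)) c * B (![a,b,c,e] (π 3)) e := by
  have step : ∀ i : Fin 4 → Fin d,
      (permOp4 (d := d) π * tensABAB A B) i i =
        A (i (π 0)) (i 0) * B (i (π 1)) (i 1) * A (i (π 2)) (i 2) * B (i (π 3)) (i 3) := by
    intro i
    rw [Matrix.mul_apply]
    have hcond : ∀ j : Fin 4 → Fin d, (∀ k, i k = j (π⁻¹ k)) ↔ j = fun m => i (π m) := by
      intro j
      constructor
      · intro h; funext m
        have := h (π m)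
        simp only [Equiv.Perm.inv_def, Equiv.symm_apply_apply] at this
        exact this.symm
      · rintro rfl k; simp
    calc ∑ j, permOp4 π i j * tensABAB A B j i
        = ∑ j, (if j = (fun m => i (π m)) then tensABAB A B j i else 0) := by
          refine Finset.sum_congr rfl fun j _ => ?_
          simp only [permOp4, Matrix.of_apply, hcond j]
          split <;> simp
      _ = tensABAB A B (fun m => i (π m)) i := by
          rw [Finset.sum_ite_eq' Finset.univ (fun m => i (π m)) (fun j => tensABAB A B j i)]
          simp
      _ = _ := by simp [tensABAB]
  rw [Matrix.trace]
  simp only [Matrix.diag]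
  rw [Finset.sum_congr rfl fun i _ => step i, sum_pi4]
  simp only [Matrix.cons_val_zero, Matrix.cons_val_one, Matrix.head_cons,
    Matrix.cons_val_two, Matrix.tail_cons, Matrix.cons_val_three, Matrix.head_fin_const]

lemma cs2 (f g : Fin d → Fin d → ℂ) {P Q : ℝ}
    (hf : ∑ i, ∑ j, ‖f i j‖ ^ 2 ≤ P) (hg : ∑ i, ∑ j, ‖g i j‖ ^ 2 ≤ Q) :
    ‖∑ i, ∑ j, f i j * g i j‖ ≤ Real.sqrt P * Real.sqrt Q := by
  calc ‖∑ i, ∑ j, f i j * g i j‖ ≤ ∑ i, ∑ j, ‖f i j‖ * ‖g i j‖ := by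
        refine (norm_sum_le _ _).trans (Finset.sum_le_sum fun i _ => ?_)
        refine (norm_sum_le _ _).trans (Finset.sum_le_sum fun j _ => ?_)
        rw [norm_mul]
    _ ≤ Real.sqrt (∑ i, ∑ j, ‖f i j‖ ^ 2) * Real.sqrt (∑ i, ∑ j, ‖g i j‖ ^ 2) := by
        have := Real.sum_mul_le_sqrt_mul_sqrt (Finset.univ ×ˢ Finset.univ)
          (fun p : Fin d × Fin d => ‖f p.1 p.2‖) (fun p => ‖g p.1 p.2‖)
        simpa [Fintype.sum_prod_type] using this
    _ ≤ Real.sqrt P * Real.sqrt Q :=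
        mul_le_mul (Real.sqrt_le_sqrt hf) (Real.sqrt_le_sqrt hg)
          (Real.sqrt_nonneg _) (Real.sqrt_nonneg _)

lemma frob_mul (f g : Fin d → Fin d → ℂ) :
    ∑ i, ∑ j, ‖∑ k, f i k * g k j‖ ^ 2 ≤
      (∑ i, ∑ j, ‖f i j‖ ^ 2) * (∑ i, ∑ j, ‖g i j‖ ^ 2) := by
  have h1 : ∀ i j : Fin d, ‖∑ k, f i k * g k j‖ ^ 2 ≤
      (∑ k, ‖f i k‖ ^ 2) * (∑ k, ‖g k j‖ ^ 2) := by
    intro i j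
    calc ‖∑ k, f i k * g k j‖ ^ 2 ≤ (∑ k, ‖f i k‖ * ‖g k j‖) ^ 2 := by
          refine pow_le_pow_left₀ (norm_nonneg _) ?_ 2
          refine (norm_sum_le _ _).trans (le_of_eq ?_)
          exact Finset.sum_congr rfl fun k _ => norm_mul _ _
      _ ≤ _ := Finset.sum_mul_sq_le_sq_mul_sq _ _ _
  calc ∑ i, ∑ j, ‖∑ k, f i k * g k j‖ ^ 2
      ≤ ∑ i, ∑ j, (∑ k, ‖f i k‖ ^ 2) * (∑ k, ‖g k j‖ ^ 2) :=
        Finset.sum_le_sum fun i _ => Finset.sum_le_sum fun j _ => h1 i j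
    _ = (∑ i, ∑ k, ‖f i k‖ ^ 2) * (∑ j, ∑ k, ‖g k j‖ ^ 2) :=
        (Finset.sum_mul_sum _ _ _ _).symm
    _ = _ := by congr 1; exact Finset.sum_comm

lemma frob_mul' (f g : Fin d → Fin d → ℂ) :
    ∑ i, ∑ j, ‖∑ k, f j k * g k i‖ ^ 2 ≤
      (∑ i, ∑ j, ‖f i j‖ ^ 2) * (∑ i, ∑ j, ‖g i j‖ ^ 2) := by
  rw [Finset.sum_comm]
  exact frob_mul f g


lemma sum4_congr {F G : Fin d → Fin d → Fin d → Fin d → ℂ}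
    (h : ∀ a b c e, F a b c e = G a b c e) :
    (∑ a, ∑ b, ∑ c, ∑ e, F a b c e) = ∑ a, ∑ b, ∑ c, ∑ e, G a b c e :=
  Finset.sum_congr rfl fun a _ => Finset.sum_congr rfl fun b _ =>
    Finset.sum_congr rfl fun c _ => Finset.sum_congr rfl fun e _ => h a b c e

lemma sum3_congr {F G : Fin d → Fin d → Fin d → ℂ}
    (h : ∀ b c e, F b c e = G b c e) :
    (∑ b, ∑ c, ∑ e, F b c e) = ∑ b, ∑ c, ∑ e, G b c e :=
  Finset.sum_congr rfl fun b _ => Finset.sum_congr rfl fun c _ =>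
    Finset.sum_congr rfl fun e _ => h b c e

lemma sum2_congr {F G : Fin d → Fin d → ℂ}
    (h : ∀ c e, F c e = G c e) :
    (∑ c, ∑ e, F c e) = ∑ c, ∑ e, G c e :=
  Finset.sum_congr rfl fun c _ => Finset.sum_congr rfl fun e _ => h c e

lemma sum3_mul (z : ℂ) (F : Fin d → Fin d → Fin d → ℂ) :
    ∑ b, ∑ c, ∑ e, z * F b c e = z * (∑ b, ∑ c, ∑ e, F b c e) := by
  simp [Finset.mul_sum]

lemma sum2_mul (z : ℂ) (F : Fin d → Fin d → ℂ) :
    ∑ c, ∑ e, z * F c e = z * (∑ c, ∑ e, F c e) := by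
  simp [Finset.mul_sum]

lemma swap23 (F : Fin d → Fin d → Fin d → Fin d → ℂ) :
    (∑ a, ∑ b, ∑ c, ∑ e, F a b c e) = ∑ a, ∑ c, ∑ b, ∑ e, F a b c e :=
  Finset.sum_congr rfl fun a _ => Finset.sum_comm

lemma swap34 (F : Fin d → Fin d → Fin d → Fin d → ℂ) :
    (∑ a, ∑ b, ∑ c, ∑ e, F a b c e) = ∑ a, ∑ b, ∑ e, ∑ c, F a b c e :=
  Finset.sum_congr rfl fun a _ => Finset.sum_congr rfl fun b _ => Finset.sum_comm

lemma zcase_a (t : Fin d → ℂ) (p q r : Fin d → Fin d → Fin d → ℂ)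
    (ht : ∑ x, t x = 0) {S : ℝ} (hS : 0 ≤ S) :
    ‖∑ a, ∑ b, ∑ c, ∑ e, t a * p b c e * q b c e * r b c e‖ ≤ S := by
  have h : (∑ a, ∑ b, ∑ c, ∑ e, t a * p b c e * q b c e * r b c e) = 0 := by
    have h1 : ∀ a : Fin d, (∑ b, ∑ c, ∑ e, t a * p b c e * q b c e * r b c e)
        = t a * ∑ b, ∑ c, ∑ e, p b c e * q b c e * r b c e := by
      intro a
      rw [← sum3_mul]
      exact sum3_congr fun b c e => by ring
    rw [Finset.sum_congr rfl fun a _ => h1 a, ← Finset.sum_mul, ht, zero_mul]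
  rw [h]
  simpa using hS

lemma zcase_b (t : Fin d → ℂ) (p q r : Fin d → Fin d → Fin d → ℂ)
    (ht : ∑ x, t x = 0) {S : ℝ} (hS : 0 ≤ S) :
    ‖∑ a, ∑ b, ∑ c, ∑ e, p a c e * t b * q a c e * r a c e‖ ≤ S := by
  have h : (∑ a, ∑ b, ∑ c, ∑ e, p a c e * t b * q a c e * r a c e) = 0 := by
    have h1 : ∀ a : Fin d, (∑ b, ∑ c, ∑ e, p a c e * t b * q a c e * r a c e) = 0 := by
      intro a
      calc (∑ b, ∑ c, ∑ e, p a c e * t b * q a c e * r a c e)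
          = ∑ b, ∑ c, ∑ e, t b * (p a c e * q a c e * r a c e) :=
            sum3_congr fun b c e => by ring
        _ = ∑ b, t b * (∑ c, ∑ e, p a c e * q a c e * r a c e) :=
            Finset.sum_congr rfl fun b _ => sum2_mul _ _
        _ = (∑ b, t b) * (∑ c, ∑ e, p a c e * q a c e * r a c e) := by
            rw [← Finset.sum_mul]
        _ = 0 := by rw [ht, zero_mul]
    rw [Finset.sum_congr rfl fun a _ => h1 a, Finset.sum_const_zero]
  rw [h]
  simpa using hS

lemma zcase_c (t : Fin d → ℂ) (p q r : Fin d → Fin d → Fin d → ℂ)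
    (ht : ∑ x, t x = 0) {S : ℝ} (hS : 0 ≤ S) :
    ‖∑ a, ∑ b, ∑ c, ∑ e, p a b e * q a b e * t c * r a b e‖ ≤ S := by
  have h : (∑ a, ∑ b, ∑ c, ∑ e, p a b e * q a b e * t c * r a b e) = 0 := by
    have h1 : ∀ a b : Fin d, (∑ c, ∑ e, p a b e * q a b e * t c * r a b e) = 0 := by
      intro a b
      calc (∑ c, ∑ e, p a b e * q a b e * t c * r a b e)
          = ∑ c, ∑ e, t c * (p a b e * q a b e * r a b e) :=
            sum2_congr fun c e => by ring
        _ = ∑ c, t c * (∑ e, p a b e * q a b e * r a b e) :=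
            Finset.sum_congr rfl fun c _ => (Finset.mul_sum _ _ _).symm
        _ = (∑ c, t c) * (∑ e, p a b e * q a b e * r a b e) := by
            rw [← Finset.sum_mul]
        _ = 0 := by rw [ht, zero_mul]
    rw [Finset.sum_congr rfl fun a _ => Finset.sum_congr rfl fun b _ => h1 a b]
    simp
  rw [h]
  simpa using hS

lemma zcase_e (t : Fin d → ℂ) (p q r : Fin d → Fin d → Fin d → ℂ)
    (ht : ∑ x, t x = 0) {S : ℝ} (hS : 0 ≤ S) :
    ‖∑ a, ∑ b, ∑ c, ∑ e, p a b c * q a b c * r a b c * t e‖ ≤ S := by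
  have h : (∑ a, ∑ b, ∑ c, ∑ e, p a b c * q a b c * r a b c * t e) = 0 := by
    have h1 : ∀ a b c : Fin d, (∑ e, p a b c * q a b c * r a b c * t e) = 0 := by
      intro a b c
      rw [← Finset.mul_sum, ht, mul_zero]
    rw [Finset.sum_congr rfl fun a _ => Finset.sum_congr rfl fun b _ =>
      Finset.sum_congr rfl fun c _ => h1 a b c]
    simp
  rw [h]
  simpa using hS


lemma sqrt4_1 {SA SB : ℝ} (hSA : 0 ≤ SA) (hSB : 0 ≤ SB) :
    Real.sqrt SA * Real.sqrt SB * (Real.sqrt SA * Real.sqrt SB) = SA * SB := by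
  rw [show Real.sqrt SA * Real.sqrt SB * (Real.sqrt SA * Real.sqrt SB)
      = Real.sqrt SA * Real.sqrt SA * (Real.sqrt SB * Real.sqrt SB) by ring,
    Real.mul_self_sqrt hSA, Real.mul_self_sqrt hSB]

lemma sqrt4_2 {SA SB : ℝ} (hSA : 0 ≤ SA) (hSB : 0 ≤ SB) :
    Real.sqrt SA * Real.sqrt SB * (Real.sqrt SB * Real.sqrt SA) = SA * SB := by
  rw [show Real.sqrt SA * Real.sqrt SB * (Real.sqrt SB * Real.sqrt SA)
      = Real.sqrt SA * Real.sqrt SA * (Real.sqrt SB * Real.sqrt SB) by ring,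
    Real.mul_self_sqrt hSA, Real.mul_self_sqrt hSB]

lemma sqrt4_3 {SA SB : ℝ} (hSA : 0 ≤ SA) (hSB : 0 ≤ SB) :
    Real.sqrt SA * Real.sqrt SA * (Real.sqrt SB * Real.sqrt SB) = SA * SB := by
  rw [Real.mul_self_sqrt hSA, Real.mul_self_sqrt hSB]

section Cases
variable (A B : Matrix (Fin d) (Fin d) ℂ)

-- (01)(23) : (Tr AB)^2
lemma case1032 :
    ‖∑ a, ∑ b, ∑ c, ∑ e, A b a * B a b * A e c * B c e‖ ≤
      (∑ i, ∑ j, ‖A i j‖ ^ 2) * (∑ i, ∑ j, ‖B i j‖ ^ 2) := by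
  have hSA0 : (0:ℝ) ≤ ∑ i, ∑ j, ‖A i j‖ ^ 2 := by positivity
  have hSB0 : (0:ℝ) ≤ ∑ i, ∑ j, ‖B i j‖ ^ 2 := by positivity
  have hsplit : (∑ a, ∑ b, ∑ c, ∑ e, A b a * B a b * A e c * B c e)
      = (∑ a, ∑ b, A b a * B a b) * (∑ c, ∑ e, A e c * B c e) := by
    calc (∑ a, ∑ b, ∑ c, ∑ e, A b a * B a b * A e c * B c e)
        = ∑ a, ∑ c, ∑ b, ∑ e, A b a * B a b * A e c * B c e := swap23 _
      _ = ∑ a, ∑ c, (∑ b, A b a * B a b) * (∑ e, A e c * B c e) := by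
          refine Finset.sum_congr rfl fun a _ => Finset.sum_congr rfl fun c _ => ?_
          rw [Finset.sum_mul_sum]
          exact sum2_congr fun b e => by ring
      _ = _ := (Finset.sum_mul_sum _ _ _ _).symm
  rw [hsplit, norm_mul]
  have b1 : ‖∑ a, ∑ b, A b a * B a b‖ ≤
      Real.sqrt (∑ i, ∑ j, ‖A i j‖ ^ 2) * Real.sqrt (∑ i, ∑ j, ‖B i j‖ ^ 2) :=
    cs2 (fun i j => A j i) (fun i j => B i j) (le_of_eq Finset.sum_comm) le_rfl
  have b2 : ‖∑ c, ∑ e, A e c * B c e‖ ≤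
      Real.sqrt (∑ i, ∑ j, ‖A i j‖ ^ 2) * Real.sqrt (∑ i, ∑ j, ‖B i j‖ ^ 2) :=
    cs2 (fun i j => A j i) (fun i j => B i j) (le_of_eq Finset.sum_comm) le_rfl
  exact le_trans (mul_le_mul b1 b2 (norm_nonneg _) (by positivity))
    (le_of_eq (sqrt4_1 hSA0 hSB0))

-- (02)(13) : Tr(A^2) Tr(B^2)
lemma case2301 :
    ‖∑ a, ∑ b, ∑ c, ∑ e, A c a * B e b * A a c * B b e‖ ≤
      (∑ i, ∑ j, ‖A i j‖ ^ 2) * (∑ i, ∑ j, ‖B i j‖ ^ 2) := by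
  have hSA0 : (0:ℝ) ≤ ∑ i, ∑ j, ‖A i j‖ ^ 2 := by positivity
  have hSB0 : (0:ℝ) ≤ ∑ i, ∑ j, ‖B i j‖ ^ 2 := by positivity
  have hsplit : (∑ a, ∑ b, ∑ c, ∑ e, A c a * B e b * A a c * B b e)
      = (∑ a, ∑ c, A c a * A a c) * (∑ b, ∑ e, B e b * B b e) := by
    calc (∑ a, ∑ b, ∑ c, ∑ e, A c a * B e b * A a c * B b e)
        = ∑ a, ∑ c, ∑ b, ∑ e, A c a * B e b * A a c * B b e := swap23 _
      _ = ∑ a, ∑ c, (A c a * A a c) * (∑ b, ∑ e, B e b * B b e) := by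
          refine Finset.sum_congr rfl fun a _ => Finset.sum_congr rfl fun c _ => ?_
          rw [← sum2_mul]
          exact sum2_congr fun b e => by ring
      _ = ∑ a, (∑ c, A c a * A a c) * (∑ b, ∑ e, B e b * B b e) :=
          Finset.sum_congr rfl fun a _ => (Finset.sum_mul _ _ _).symm
      _ = _ := (Finset.sum_mul _ _ _).symm
  rw [hsplit, norm_mul]
  have b1 : ‖∑ a, ∑ c, A c a * A a c‖ ≤
      Real.sqrt (∑ i, ∑ j, ‖A i j‖ ^ 2) * Real.sqrt (∑ i, ∑ j, ‖A i j‖ ^ 2) :=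
    cs2 (fun i j => A j i) (fun i j => A i j) (le_of_eq Finset.sum_comm) le_rfl
  have b2 : ‖∑ b, ∑ e, B e b * B b e‖ ≤
      Real.sqrt (∑ i, ∑ j, ‖B i j‖ ^ 2) * Real.sqrt (∑ i, ∑ j, ‖B i j‖ ^ 2) :=
    cs2 (fun i j => B j i) (fun i j => B i j) (le_of_eq Finset.sum_comm) le_rfl
  exact le_trans (mul_le_mul b1 b2 (norm_nonneg _) (by positivity))
    (le_of_eq (sqrt4_3 hSA0 hSB0))

-- (03)(12) : Tr(AB) Tr(BA)
lemma case3210 :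
    ‖∑ a, ∑ b, ∑ c, ∑ e, A e a * B c b * A b c * B a e‖ ≤
      (∑ i, ∑ j, ‖A i j‖ ^ 2) * (∑ i, ∑ j, ‖B i j‖ ^ 2) := by
  have hSA0 : (0:ℝ) ≤ ∑ i, ∑ j, ‖A i j‖ ^ 2 := by positivity
  have hSB0 : (0:ℝ) ≤ ∑ i, ∑ j, ‖B i j‖ ^ 2 := by positivity
  have hsplit : (∑ a, ∑ b, ∑ c, ∑ e, A e a * B c b * A b c * B a e)
      = (∑ a, ∑ e, A e a * B a e) * (∑ b, ∑ c, B c b * A b c) := by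
    calc (∑ a, ∑ b, ∑ c, ∑ e, A e a * B c b * A b c * B a e)
        = ∑ a, ∑ b, ∑ e, ∑ c, A e a * B c b * A b c * B a e := swap34 _
      _ = ∑ a, ∑ e, ∑ b, ∑ c, A e a * B c b * A b c * B a e := swap23 _
      _ = ∑ a, ∑ e, (A e a * B a e) * (∑ b, ∑ c, B c b * A b c) := by
          refine Finset.sum_congr rfl fun a _ => Finset.sum_congr rfl fun e _ => ?_
          rw [← sum2_mul]
          exact sum2_congr fun b c => by ring
      _ = ∑ a, (∑ e, A e a * B a e) * (∑ b, ∑ c, B c b * A b c) :=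
          Finset.sum_congr rfl fun a _ => (Finset.sum_mul _ _ _).symm
      _ = _ := (Finset.sum_mul _ _ _).symm
  rw [hsplit, norm_mul]
  have b1 : ‖∑ a, ∑ e, A e a * B a e‖ ≤
      Real.sqrt (∑ i, ∑ j, ‖A i j‖ ^ 2) * Real.sqrt (∑ i, ∑ j, ‖B i j‖ ^ 2) :=
    cs2 (fun i j => A j i) (fun i j => B i j) (le_of_eq Finset.sum_comm) le_rfl
  have b2 : ‖∑ b, ∑ c, B c b * A b c‖ ≤
      Real.sqrt (∑ i, ∑ j, ‖B i j‖ ^ 2) * Real.sqrt (∑ i, ∑ j, ‖A i j‖ ^ 2) :=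
    cs2 (fun i j => B j i) (fun i j => A i j) (le_of_eq Finset.sum_comm) le_rfl
  exact le_trans (mul_le_mul b1 b2 (norm_nonneg _) (by positivity))
    (le_of_eq (sqrt4_2 hSA0 hSB0))

lemma case1230 :
    ‖∑ a, ∑ b, ∑ c, ∑ e, A b a * B c b * A e c * B a e‖ ≤
      (∑ i, ∑ j, ‖A i j‖ ^ 2) * (∑ i, ∑ j, ‖B i j‖ ^ 2) := by
  have hSA0 : (0:ℝ) ≤ ∑ i, ∑ j, ‖A i j‖ ^ 2 := by positivity
  have hSB0 : (0:ℝ) ≤ ∑ i, ∑ j, ‖B i j‖ ^ 2 := by positivity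
  have hsplit : (∑ a, ∑ b, ∑ c, ∑ e, A b a * B c b * A e c * B a e)
      = ∑ a, ∑ c, (∑ b, B c b * A b a) * (∑ e, B a e * A e c) := by
    calc (∑ a, ∑ b, ∑ c, ∑ e, A b a * B c b * A e c * B a e)
        = ∑ a, ∑ c, ∑ b, ∑ e, A b a * B c b * A e c * B a e := swap23 _
      _ = ∑ a, ∑ c, (∑ b, B c b * A b a) * (∑ e, B a e * A e c) := by
          refine Finset.sum_congr rfl fun a _ => Finset.sum_congr rfl fun c _ => ?_
          rw [Finset.sum_mul_sum]
          exact sum2_congr fun b e => by ring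
  rw [hsplit]
  have hf : (∑ i, ∑ j, ‖(∑ k, B j k * A k i : ℂ)‖ ^ 2) ≤ (∑ i, ∑ j, ‖A i j‖ ^ 2) * (∑ i, ∑ j, ‖B i j‖ ^ 2) := (frob_mul' B A).trans_eq (mul_comm _ _)
  have hg : (∑ i, ∑ j, ‖(∑ k, B i k * A k j : ℂ)‖ ^ 2) ≤ (∑ i, ∑ j, ‖A i j‖ ^ 2) * (∑ i, ∑ j, ‖B i j‖ ^ 2) := (frob_mul B A).trans_eq (mul_comm _ _)
  refine le_trans (cs2 (fun i j => ∑ k, B j k * A k i) (fun i j => ∑ k, B i k * A k j) hf hg) (le_of_eq ?_)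
  exact Real.mul_self_sqrt (mul_nonneg hSA0 hSB0)

lemma case1302 :
    ‖∑ a, ∑ b, ∑ c, ∑ e, A b a * B e b * A a c * B c e‖ ≤
      (∑ i, ∑ j, ‖A i j‖ ^ 2) * (∑ i, ∑ j, ‖B i j‖ ^ 2) := by
  have hSA0 : (0:ℝ) ≤ ∑ i, ∑ j, ‖A i j‖ ^ 2 := by positivity
  have hSB0 : (0:ℝ) ≤ ∑ i, ∑ j, ‖B i j‖ ^ 2 := by positivity
  have hsplit : (∑ a, ∑ b, ∑ c, ∑ e, A b a * B e b * A a c * B c e)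
      = ∑ a, ∑ e, (∑ b, B e b * A b a) * (∑ c, A a c * B c e) := by
    calc (∑ a, ∑ b, ∑ c, ∑ e, A b a * B e b * A a c * B c e)
        = ∑ a, ∑ b, ∑ e, ∑ c, A b a * B e b * A a c * B c e := swap34 _
      _ = ∑ a, ∑ e, ∑ b, ∑ c, A b a * B e b * A a c * B c e := swap23 _
      _ = ∑ a, ∑ e, (∑ b, B e b * A b a) * (∑ c, A a c * B c e) := by
          refine Finset.sum_congr rfl fun a _ => Finset.sum_congr rfl fun e _ => ?_
          rw [Finset.sum_mul_sum]
          exact sum2_congr fun b c => by ring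
  rw [hsplit]
  have hf : (∑ i, ∑ j, ‖(∑ k, B j k * A k i : ℂ)‖ ^ 2) ≤ (∑ i, ∑ j, ‖A i j‖ ^ 2) * (∑ i, ∑ j, ‖B i j‖ ^ 2) := (frob_mul' B A).trans_eq (mul_comm _ _)
  have hg : (∑ i, ∑ j, ‖(∑ k, A i k * B k j : ℂ)‖ ^ 2) ≤ (∑ i, ∑ j, ‖A i j‖ ^ 2) * (∑ i, ∑ j, ‖B i j‖ ^ 2) := frob_mul A B
  refine le_trans (cs2 (fun i j => ∑ k, B j k * A k i) (fun i j => ∑ k, A i k * B k j) hf hg) (le_of_eq ?_)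
  exact Real.mul_self_sqrt (mul_nonneg hSA0 hSB0)

lemma case2031 :
    ‖∑ a, ∑ b, ∑ c, ∑ e, A c a * B a b * A e c * B b e‖ ≤
      (∑ i, ∑ j, ‖A i j‖ ^ 2) * (∑ i, ∑ j, ‖B i j‖ ^ 2) := by
  have hSA0 : (0:ℝ) ≤ ∑ i, ∑ j, ‖A i j‖ ^ 2 := by positivity
  have hSB0 : (0:ℝ) ≤ ∑ i, ∑ j, ‖B i j‖ ^ 2 := by positivity
  have hsplit : (∑ a, ∑ b, ∑ c, ∑ e, A c a * B a b * A e c * B b e)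
      = ∑ a, ∑ e, (∑ b, B a b * B b e) * (∑ c, A e c * A c a) := by
    calc (∑ a, ∑ b, ∑ c, ∑ e, A c a * B a b * A e c * B b e)
        = ∑ a, ∑ b, ∑ e, ∑ c, A c a * B a b * A e c * B b e := swap34 _
      _ = ∑ a, ∑ e, ∑ b, ∑ c, A c a * B a b * A e c * B b e := swap23 _
      _ = ∑ a, ∑ e, (∑ b, B a b * B b e) * (∑ c, A e c * A c a) := by
          refine Finset.sum_congr rfl fun a _ => Finset.sum_congr rfl fun e _ => ?_
          rw [Finset.sum_mul_sum]
          exact sum2_congr fun b c => by ring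
  rw [hsplit]
  have hf : (∑ i, ∑ j, ‖(∑ k, B i k * B k j : ℂ)‖ ^ 2) ≤ (∑ i, ∑ j, ‖B i j‖ ^ 2) * (∑ i, ∑ j, ‖B i j‖ ^ 2) := frob_mul B B
  have hg : (∑ i, ∑ j, ‖(∑ k, A j k * A k i : ℂ)‖ ^ 2) ≤ (∑ i, ∑ j, ‖A i j‖ ^ 2) * (∑ i, ∑ j, ‖A i j‖ ^ 2) := frob_mul' A A
  refine le_trans (cs2 (fun i j => ∑ k, B i k * B k j) (fun i j => ∑ k, A j k * A k i) hf hg) (le_of_eq ?_)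
  rw [Real.sqrt_mul_self hSB0, Real.sqrt_mul_self hSA0]; exact mul_comm _ _

lemma case2310 :
    ‖∑ a, ∑ b, ∑ c, ∑ e, A c a * B e b * A b c * B a e‖ ≤
      (∑ i, ∑ j, ‖A i j‖ ^ 2) * (∑ i, ∑ j, ‖B i j‖ ^ 2) := by
  have hSA0 : (0:ℝ) ≤ ∑ i, ∑ j, ‖A i j‖ ^ 2 := by positivity
  have hSB0 : (0:ℝ) ≤ ∑ i, ∑ j, ‖B i j‖ ^ 2 := by positivity
  have hsplit : (∑ a, ∑ b, ∑ c, ∑ e, A c a * B e b * A b c * B a e)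
      = ∑ a, ∑ b, (∑ c, A b c * A c a) * (∑ e, B a e * B e b) := by
    calc (∑ a, ∑ b, ∑ c, ∑ e, A c a * B e b * A b c * B a e)
      _ = ∑ a, ∑ b, (∑ c, A b c * A c a) * (∑ e, B a e * B e b) := by
          refine Finset.sum_congr rfl fun a _ => Finset.sum_congr rfl fun b _ => ?_
          rw [Finset.sum_mul_sum]
          exact sum2_congr fun c e => by ring
  rw [hsplit]
  have hf : (∑ i, ∑ j, ‖(∑ k, A j k * A k i : ℂ)‖ ^ 2) ≤ (∑ i, ∑ j, ‖A i j‖ ^ 2) * (∑ i, ∑ j, ‖A i j‖ ^ 2) := frob_mul' A A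
  have hg : (∑ i, ∑ j, ‖(∑ k, B i k * B k j : ℂ)‖ ^ 2) ≤ (∑ i, ∑ j, ‖B i j‖ ^ 2) * (∑ i, ∑ j, ‖B i j‖ ^ 2) := frob_mul B B
  refine le_trans (cs2 (fun i j => ∑ k, A j k * A k i) (fun i j => ∑ k, B i k * B k j) hf hg) (le_of_eq ?_)
  rw [Real.sqrt_mul_self hSA0, Real.sqrt_mul_self hSB0]

lemma case3012 :
    ‖∑ a, ∑ b, ∑ c, ∑ e, A e a * B a b * A b c * B c e‖ ≤
      (∑ i, ∑ j, ‖A i j‖ ^ 2) * (∑ i, ∑ j, ‖B i j‖ ^ 2) := by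
  have hSA0 : (0:ℝ) ≤ ∑ i, ∑ j, ‖A i j‖ ^ 2 := by positivity
  have hSB0 : (0:ℝ) ≤ ∑ i, ∑ j, ‖B i j‖ ^ 2 := by positivity
  have hsplit : (∑ a, ∑ b, ∑ c, ∑ e, A e a * B a b * A b c * B c e)
      = ∑ a, ∑ c, (∑ b, B a b * A b c) * (∑ e, B c e * A e a) := by
    calc (∑ a, ∑ b, ∑ c, ∑ e, A e a * B a b * A b c * B c e)
        = ∑ a, ∑ c, ∑ b, ∑ e, A e a * B a b * A b c * B c e := swap23 _
      _ = ∑ a, ∑ c, (∑ b, B a b * A b c) * (∑ e, B c e * A e a) := by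
          refine Finset.sum_congr rfl fun a _ => Finset.sum_congr rfl fun c _ => ?_
          rw [Finset.sum_mul_sum]
          exact sum2_congr fun b e => by ring
  rw [hsplit]
  have hf : (∑ i, ∑ j, ‖(∑ k, B i k * A k j : ℂ)‖ ^ 2) ≤ (∑ i, ∑ j, ‖A i j‖ ^ 2) * (∑ i, ∑ j, ‖B i j‖ ^ 2) := (frob_mul B A).trans_eq (mul_comm _ _)
  have hg : (∑ i, ∑ j, ‖(∑ k, B j k * A k i : ℂ)‖ ^ 2) ≤ (∑ i, ∑ j, ‖A i j‖ ^ 2) * (∑ i, ∑ j, ‖B i j‖ ^ 2) := (frob_mul' B A).trans_eq (mul_comm _ _)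
  refine le_trans (cs2 (fun i j => ∑ k, B i k * A k j) (fun i j => ∑ k, B j k * A k i) hf hg) (le_of_eq ?_)
  exact Real.mul_self_sqrt (mul_nonneg hSA0 hSB0)

lemma case3201 :
    ‖∑ a, ∑ b, ∑ c, ∑ e, A e a * B c b * A a c * B b e‖ ≤
      (∑ i, ∑ j, ‖A i j‖ ^ 2) * (∑ i, ∑ j, ‖B i j‖ ^ 2) := by
  have hSA0 : (0:ℝ) ≤ ∑ i, ∑ j, ‖A i j‖ ^ 2 := by positivity
  have hSB0 : (0:ℝ) ≤ ∑ i, ∑ j, ‖B i j‖ ^ 2 := by positivity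
  have hsplit : (∑ a, ∑ b, ∑ c, ∑ e, A e a * B c b * A a c * B b e)
      = ∑ a, ∑ b, (∑ c, A a c * B c b) * (∑ e, B b e * A e a) := by
    calc (∑ a, ∑ b, ∑ c, ∑ e, A e a * B c b * A a c * B b e)
      _ = ∑ a, ∑ b, (∑ c, A a c * B c b) * (∑ e, B b e * A e a) := by
          refine Finset.sum_congr rfl fun a _ => Finset.sum_congr rfl fun b _ => ?_
          rw [Finset.sum_mul_sum]
          exact sum2_congr fun c e => by ring
  rw [hsplit]
  have hf : (∑ i, ∑ j, ‖(∑ k, A i k * B k j : ℂ)‖ ^ 2) ≤ (∑ i, ∑ j, ‖A i j‖ ^ 2) * (∑ i, ∑ j, ‖B i j‖ ^ 2) := frob_mul A B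
  have hg : (∑ i, ∑ j, ‖(∑ k, B j k * A k i : ℂ)‖ ^ 2) ≤ (∑ i, ∑ j, ‖A i j‖ ^ 2) * (∑ i, ∑ j, ‖B i j‖ ^ 2) := (frob_mul' B A).trans_eq (mul_comm _ _)
  refine le_trans (cs2 (fun i j => ∑ k, A i k * B k j) (fun i j => ∑ k, B j k * A k i) hf hg) (le_of_eq ?_)
  exact Real.mul_self_sqrt (mul_nonneg hSA0 hSB0)

end Cases

end Stmt11Aux

set_option maxHeartbeats 2000000 in
/-- For traceless Hermitian `A, B` on `ℂ^d` and any permutation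
`π ∈ S₄`, `|Tr(W_π (A⊗B⊗A⊗B))| ≤ ‖A‖₂² ‖B‖₂²` where `‖·‖₂` is the
Hilbert–Schmidt norm. -/
theorem stmt11 {d : ℕ} (A B : Matrix (Fin d) (Fin d) ℂ)
    (hA : A.IsHermitian) (hB : B.IsHermitian)
    (hAtr : A.trace = 0) (hBtr : B.trace = 0)
    (π : Equiv.Perm (Fin 4)) :
    ‖(permOp4 π * tensABAB A B).trace‖ ≤
      (A * A).trace.re * (B * B).trace.re := by
  have hfin : ∀ x : Fin 4, x = 0 ∨ x = 1 ∨ x = 2 ∨ x = 3 := by decide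
  have htA : ∑ x : Fin d, A x x = 0 := by simpa [Matrix.trace, Matrix.diag] using hAtr
  have htB : ∑ x : Fin d, B x x = 0 := by simpa [Matrix.trace, Matrix.diag] using hBtr
  have hSA0 : (0:ℝ) ≤ ∑ i, ∑ j, ‖A i j‖ ^ 2 := by positivity
  have hSB0 : (0:ℝ) ≤ ∑ i, ∑ j, ‖B i j‖ ^ 2 := by positivity
  have hS0 : (0:ℝ) ≤ (∑ i, ∑ j, ‖A i j‖ ^ 2) * (∑ i, ∑ j, ‖B i j‖ ^ 2) :=
    mul_nonneg hSA0 hSB0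
  rw [Stmt11Aux.herm_tr A hA, Stmt11Aux.herm_tr B hB, Stmt11Aux.trace_eq A B π]
  rcases hfin (π 0) with h0|h0|h0|h0 <;> rcases hfin (π 1) with h1|h1|h1|h1 <;>
    rcases hfin (π 2) with h2|h2|h2|h2 <;> rcases hfin (π 3) with h3|h3|h3|h3 <;>
    first
    | exact absurd (π.injective (h0.trans h1.symm)) (by decide)
    | exact absurd (π.injective (h0.trans h2.symm)) (by decide)
    | exact absurd (π.injective (h0.trans h3.symm)) (by decide)
    | exact absurd (π.injective (h1.trans h2.symm)) (by decide)
    | exact absurd (π.injective (h1.trans h3.symm)) (by decide)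
    | exact absurd (π.injective (h2.trans h3.symm)) (by decide)
    | (rw [h0, h1, h2, h3];
       simp only [Matrix.cons_val_zero, Matrix.cons_val_one, Matrix.head_cons,
         Matrix.cons_val_two, Matrix.tail_cons, Matrix.cons_val_three])
  · exact Stmt11Aux.zcase_a _ _ _ _ htA hS0
  · exact Stmt11Aux.zcase_a _ _ _ _ htA hS0
  · exact Stmt11Aux.zcase_a _ _ _ _ htA hS0
  · exact Stmt11Aux.zcase_a _ _ _ _ htA hS0
  · exact Stmt11Aux.zcase_a _ _ _ _ htA hS0
  · exact Stmt11Aux.zcase_a _ _ _ _ htA hS0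
  · exact Stmt11Aux.zcase_c _ _ _ _ htA hS0
  · exact Stmt11Aux.case1032 A B
  · exact Stmt11Aux.zcase_e _ _ _ _ htB hS0
  · exact Stmt11Aux.case1230 A B
  · exact Stmt11Aux.case1302 A B
  · exact Stmt11Aux.zcase_c _ _ _ _ htA hS0
  · exact Stmt11Aux.zcase_e _ _ _ _ htB hS0
  · exact Stmt11Aux.case2031 A B
  · exact Stmt11Aux.zcase_b _ _ _ _ htB hS0
  · exact Stmt11Aux.zcase_b _ _ _ _ htB hS0
  · exact Stmt11Aux.case2301 A B
  · exact Stmt11Aux.case2310 A B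
  · exact Stmt11Aux.case3012 A B
  · exact Stmt11Aux.zcase_c _ _ _ _ htA hS0
  · exact Stmt11Aux.zcase_b _ _ _ _ htB hS0
  · exact Stmt11Aux.zcase_b _ _ _ _ htB hS0
  · exact Stmt11Aux.case3201 A B
  · exact Stmt11Aux.case3210 A B
end

section
/- Let σ = |φ⟩⟨φ| be a pure state on (ℂ²)^⊗n with d = 2ⁿ, let 𝒫̄ₙ denote the set of n-qubit Pauli operators (d² tensor products of I, X, Y, Z), and let P ∈ 𝒫̄ₙ with P ≠ I. Define η = 1 − (Tr(σP))² and K_σ(P) = Σ_{Q ∈ 𝒫̄ₙ : QP = −PQ} (Tr(σQ))⁴. Then K_σ(P) ≤ d η² / 2. -/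
open scoped Classical

/-- The single-qubit Pauli matrices `I, X, Y, Z`. -/
noncomputable def pauli1 : Fin 4 → Matrix (Fin 2) (Fin 2) ℂ :=
  ![1, !![0, 1; 1, 0], !![0, -Complex.I; Complex.I, 0], !![1, 0; 0, -1]]

/-- The `n`-qubit Pauli operator labelled by `f : Fin n → Fin 4`, i.e. the tensor
product `⊗ₖ pauli1 (f k)`, written as a matrix on `(ℂ²)^⊗n` with the product basis
indexed by `Fin n → Fin 2`. -/
noncomputable def pauliN {n : ℕ} (f : Fin n → Fin 4) :
    Matrix (Fin n → Fin 2) (Fin n → Fin 2) ℂ :=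
  Matrix.of fun i j => ∏ k, pauli1 (f k) (i k) (j k)

namespace Stmt12Aux

open Matrix

lemma pauli1_herm (s : Fin 4) : (pauli1 s)ᴴ = pauli1 s := by
  fin_cases s <;> ext i j <;> fin_cases i <;> fin_cases j <;>
    simp [pauli1, Matrix.conjTranspose_apply, Matrix.one_apply]

lemma pauli1_sq (s : Fin 4) : pauli1 s * pauli1 s = 1 := by
  fin_cases s <;> ext i j <;> fin_cases i <;> fin_cases j <;>
    simp [pauli1, Matrix.mul_apply, Fin.sum_univ_two, Matrix.one_apply, Complex.ext_iff]

lemma pauli1_comm_or (s t : Fin 4) :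
    pauli1 s * pauli1 t = pauli1 t * pauli1 s ∨
    pauli1 s * pauli1 t = -(pauli1 t * pauli1 s) := by
  fin_cases s <;> fin_cases t <;>
    first
    | (left; ext i j <;> fin_cases i <;> fin_cases j <;>
        simp [pauli1, Matrix.mul_apply, Fin.sum_univ_two, Complex.ext_iff] <;> done)
    | (right; ext i j <;> fin_cases i <;> fin_cases j <;>
        simp [pauli1, Matrix.mul_apply, Fin.sum_univ_two, Complex.ext_iff])

lemma pauli1_complete (a b c d : Fin 2) :
    ∑ s : Fin 4, pauli1 s a b * pauli1 s c d = if a = d ∧ b = c then 2 else 0 := by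
  fin_cases a <;> fin_cases b <;> fin_cases c <;> fin_cases d <;>
    simp [pauli1, Fin.sum_univ_four, Complex.ext_iff] <;> norm_num

lemma pi_sum_prod {n : ℕ} {α : Type*} [Fintype α] (F : Fin n → α → ℂ) :
    ∑ m : Fin n → α, ∏ k, F k (m k) = ∏ k, ∑ x, F k x := by
  rw [Finset.prod_univ_sum, Fintype.sum_equiv (Equiv.refl _)]
  · rfl
  · intro m; rfl

lemma pauliN_mul {n : ℕ} (f g : Fin n → Fin 4) :
    pauliN f * pauliN g =
      Matrix.of fun i j => ∏ k, (pauli1 (f k) * pauli1 (g k)) (i k) (j k) := by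
  ext i j
  simp only [Matrix.mul_apply, pauliN, Matrix.of_apply]
  rw [← pi_sum_prod (fun k x => pauli1 (f k) (i k) x * pauli1 (g k) x (j k))]
  exact Finset.sum_congr rfl fun m _ => (Finset.prod_mul_distrib).symm

lemma pauliN_sq {n : ℕ} (f : Fin n → Fin 4) : pauliN f * pauliN f = 1 := by
  rw [pauliN_mul]
  ext i j
  simp only [Matrix.of_apply, pauli1_sq, Matrix.one_apply]
  by_cases h : i = j
  · subst h; simp
  · rw [if_neg h]
    obtain ⟨k, hk⟩ : ∃ k, i k ≠ j k := by
      by_contra hc; push_neg at hc; exact h (funext hc)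
    exact Finset.prod_eq_zero (Finset.mem_univ k) (by simp [Matrix.one_apply, hk])

lemma pauliN_herm {n : ℕ} (f : Fin n → Fin 4) : (pauliN f)ᴴ = pauliN f := by
  ext i j
  simp only [Matrix.conjTranspose_apply, pauliN, Matrix.of_apply, star_prod]
  exact Finset.prod_congr rfl fun k _ => by
    rw [← Matrix.conjTranspose_apply, pauli1_herm]

lemma pauliN_comm_or {n : ℕ} (f g : Fin n → Fin 4) :
    pauliN g * pauliN f = pauliN f * pauliN g ∨
    pauliN g * pauliN f = -(pauliN f * pauliN g) := by
  set ε : Fin n → ℂ := fun k =>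
    if pauli1 (g k) * pauli1 (f k) = pauli1 (f k) * pauli1 (g k) then 1 else -1 with hε
  have hk : ∀ k, pauli1 (g k) * pauli1 (f k) = ε k • (pauli1 (f k) * pauli1 (g k)) := by
    intro k
    by_cases h : pauli1 (g k) * pauli1 (f k) = pauli1 (f k) * pauli1 (g k)
    · simp [hε, h]
    · rcases pauli1_comm_or (g k) (f k) with h' | h'
      · exact absurd h' h
      · simp [hε, if_neg h, h']
  have hmain : pauliN g * pauliN f = (∏ k, ε k) • (pauliN f * pauliN g) := by
    rw [pauliN_mul, pauliN_mul]
    ext i j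
    simp only [Matrix.smul_apply, Matrix.of_apply, smul_eq_mul]
    rw [← Finset.prod_mul_distrib]
    exact Finset.prod_congr rfl fun k _ => by rw [hk k]; simp
  have hsq : (∏ k, ε k) * (∏ k, ε k) = 1 := by
    rw [← Finset.prod_mul_distrib]
    apply Finset.prod_eq_one
    intro k _
    by_cases h : pauli1 (g k) * pauli1 (f k) = pauli1 (f k) * pauli1 (g k) <;>
      simp [hε, h]
  rcases mul_self_eq_one_iff.mp hsq with h | h
  · left; rw [hmain, h, one_smul]
  · right; rw [hmain, h, neg_smul, one_smul]

lemma pauliN_complete {n : ℕ} (i j k l : Fin n → Fin 2) :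
    ∑ g : Fin n → Fin 4, pauliN g j i * pauliN g l k =
      if j = k ∧ i = l then (2:ℂ)^n else 0 := by
  have h0 : ∀ g : Fin n → Fin 4, pauliN g j i * pauliN g l k =
      ∏ m, (pauli1 (g m) (j m) (i m) * pauli1 (g m) (l m) (k m)) := by
    intro g; simp only [pauliN, Matrix.of_apply]; rw [← Finset.prod_mul_distrib]
  simp only [h0]
  rw [pi_sum_prod (fun m s => pauli1 s (j m) (i m) * pauli1 s (l m) (k m))]
  simp only [pauli1_complete]
  by_cases h : j = k ∧ i = l
  · rw [if_pos h]
    rw [Finset.prod_congr rfl (fun m _ => if_pos ⟨congrFun h.1 m, congrFun h.2 m⟩)]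
    simp
  · rw [if_neg h]
    have hex : ∃ m, ¬(j m = k m ∧ i m = l m) := by
      by_contra hc; push_neg at hc
      exact h ⟨funext fun m => (hc m).1, funext fun m => (hc m).2⟩
    obtain ⟨m, hm⟩ := hex
    exact Finset.prod_eq_zero (Finset.mem_univ m) (if_neg hm)

lemma parseval {n : ℕ} (A B : Matrix (Fin n → Fin 2) (Fin n → Fin 2) ℂ) :
    ∑ g : Fin n → Fin 4, (A * pauliN g).trace * (B * pauliN g).trace =
      (2:ℂ)^n * (A * B).trace := by
  have htr : ∀ (M : Matrix (Fin n → Fin 2) (Fin n → Fin 2) ℂ) (g : Fin n → Fin 4),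
      (M * pauliN g).trace = ∑ p : (Fin n → Fin 2) × (Fin n → Fin 2),
        M p.1 p.2 * pauliN g p.2 p.1 := by
    intro M g
    rw [Fintype.sum_prod_type]
    simp [Matrix.trace, Matrix.diag, Matrix.mul_apply]
  simp only [htr]
  have step : ∀ g : Fin n → Fin 4,
      (∑ p : (Fin n → Fin 2) × (Fin n → Fin 2), A p.1 p.2 * pauliN g p.2 p.1) *
      (∑ q : (Fin n → Fin 2) × (Fin n → Fin 2), B q.1 q.2 * pauliN g q.2 q.1) =
      ∑ p : (Fin n → Fin 2) × (Fin n → Fin 2), ∑ q : (Fin n → Fin 2) × (Fin n → Fin 2),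
        A p.1 p.2 * B q.1 q.2 * (pauliN g p.2 p.1 * pauliN g q.2 q.1) := by
    intro g
    rw [Finset.sum_mul_sum]
    exact Finset.sum_congr rfl fun p _ => Finset.sum_congr rfl fun q _ => by ring
  simp only [step]
  rw [Finset.sum_comm]
  have swap2 : ∀ p : (Fin n → Fin 2) × (Fin n → Fin 2),
      (∑ g : Fin n → Fin 4, ∑ q : (Fin n → Fin 2) × (Fin n → Fin 2),
        A p.1 p.2 * B q.1 q.2 * (pauliN g p.2 p.1 * pauliN g q.2 q.1)) =
      ∑ q : (Fin n → Fin 2) × (Fin n → Fin 2), A p.1 p.2 * B q.1 q.2 *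
        (if p.2 = q.1 ∧ p.1 = q.2 then (2:ℂ)^n else 0) := by
    intro p
    rw [Finset.sum_comm]
    refine Finset.sum_congr rfl fun q _ => ?_
    rw [← Finset.mul_sum, pauliN_complete]
  simp only [swap2]
  have collapse : ∀ p : (Fin n → Fin 2) × (Fin n → Fin 2),
      (∑ q : (Fin n → Fin 2) × (Fin n → Fin 2), A p.1 p.2 * B q.1 q.2 *
        (if p.2 = q.1 ∧ p.1 = q.2 then (2:ℂ)^n else 0)) =
      (2:ℂ)^n * (A p.1 p.2 * B p.2 p.1) := by
    intro p
    rw [Finset.sum_eq_single (p.2, p.1)]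
    · simp; ring
    · intro q _ hq
      rw [if_neg, mul_zero]
      intro hc
      exact hq (Prod.ext hc.1.symm hc.2.symm)
    · simp
  simp only [collapse]
  rw [← Finset.mul_sum]
  congr 1
  rw [Fintype.sum_prod_type]
  simp [Matrix.trace, Matrix.diag, Matrix.mul_apply]

variable {m : Type*} [Fintype m] [DecidableEq m]

lemma trace_mul_conjT_nonneg (M : Matrix m m ℂ) : 0 ≤ (M * Mᴴ).trace.re := by
  have h : (M * Mᴴ).trace = ∑ i, ∑ j, M i j * star (M i j) := by
    simp [Matrix.trace, Matrix.diag, Matrix.mul_apply, Matrix.conjTranspose_apply]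
  rw [h, Complex.re_sum]
  apply Finset.sum_nonneg; intro i _
  rw [Complex.re_sum]
  apply Finset.sum_nonneg; intro j _
  have : M i j * star (M i j) = ((Complex.normSq (M i j) : ℝ) : ℂ) :=
    Complex.mul_conj _
  rw [this, Complex.ofReal_re]
  exact Complex.normSq_nonneg _

lemma trace_mul_herm_real {A B : Matrix m m ℂ} (hA : Aᴴ = A) (hB : Bᴴ = B) :
    (A * B).trace = ((A * B).trace.re : ℂ) := by
  have h1 : (starRingEnd ℂ) ((A*B).trace) = ((A*B)ᴴ).trace :=
    (Matrix.trace_conjTranspose _).symm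
  have h2 : (starRingEnd ℂ) ((A*B).trace) = (A*B).trace := by
    rw [h1, Matrix.conjTranspose_mul, hA, hB, Matrix.trace_mul_comm]
  exact (Complex.conj_eq_iff_re.mp h2).symm

lemma cs1 {σ c : Matrix m m ℂ} (hσ : σᴴ = σ) (hσ2 : σ * σ = σ) (hσtr : σ.trace = 1)
    (hc : cᴴ = c) : ((σ * c).trace.re) ^ 2 ≤ (σ * c * σ * c).trace.re := by
  set t : ℝ := (σ * c).trace.re with ht
  have htr : (σ * c).trace = (t : ℂ) := trace_mul_herm_real hσ hc
  set M : Matrix m m ℂ := σ * c * σ - (t : ℂ) • σ with hM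
  have hMH : Mᴴ = M := by
    rw [hM, Matrix.conjTranspose_sub, Matrix.conjTranspose_smul,
      Matrix.conjTranspose_mul, Matrix.conjTranspose_mul, hσ, hc,
      Complex.star_def, Complex.conj_ofReal, Matrix.mul_assoc]
  have expand : M * M = σ*c*(σ*σ)*(c*σ) - (t:ℂ)•(σ*c*(σ*σ)) - (t:ℂ)•((σ*σ)*(c*σ))
      + ((t:ℂ)*(t:ℂ))•(σ*σ) := by
    rw [hM]; noncomm_ring
    module
  rw [hσ2] at expand
  have e1 : (σ*c*σ*(c*σ)).trace = (σ*c*σ*c).trace := by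
    rw [show σ*c*σ*(c*σ) = (σ*c*σ*c)*σ from by noncomm_ring, Matrix.trace_mul_comm,
      show σ*(σ*c*σ*c) = (σ*σ)*(c*(σ*c)) from by noncomm_ring, hσ2,
      show σ*(c*(σ*c)) = σ*c*σ*c from by noncomm_ring]
  have e2 : (σ*c*σ).trace = (t : ℂ) := by
    rw [Matrix.trace_mul_comm, show σ*(σ*c) = (σ*σ)*c from by noncomm_ring, hσ2, htr]
  have e3 : (σ*(c*σ)).trace = (t : ℂ) := by
    rw [show σ*(c*σ) = (σ*c)*σ from by noncomm_ring]; exact e2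
  have htrace : (M * M).trace = (σ*c*σ*c).trace - ((t:ℂ))^2 := by
    rw [expand]
    rw [Matrix.trace_add, Matrix.trace_sub, Matrix.trace_sub, Matrix.trace_smul,
      Matrix.trace_smul, Matrix.trace_smul, e1, e2, e3, hσtr]
    simp only [smul_eq_mul, smul_eq_mul]
    ring
  have hpos := trace_mul_conjT_nonneg M
  rw [hMH, htrace] at hpos
  have : ((σ*c*σ*c).trace - ((t:ℂ))^2).re = (σ*c*σ*c).trace.re - t^2 := by
    simp [Complex.sub_re]
    norm_cast
  rw [this] at hpos
  linarith

lemma cs2 {σ c : Matrix m m ℂ} (hσ : σᴴ = σ) (hσ2 : σ * σ = σ)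
    (hc : cᴴ = c) : (σ * c * σ * c).trace.re ≤ (σ * c * c).trace.re := by
  set B : Matrix m m ℂ := σ * c * (1 - σ) with hB
  have hBH : Bᴴ = (1 - σ) * (c * σ) := by
    rw [hB, Matrix.conjTranspose_mul, Matrix.conjTranspose_mul,
      Matrix.conjTranspose_sub, Matrix.conjTranspose_one, hσ, hc]
  have expand : B * Bᴴ = σ*c*(c*σ) - σ*c*σ*(c*σ) - σ*c*σ*(c*σ) + σ*c*(σ*σ)*(c*σ) := by
    rw [hBH, hB]; noncomm_ring
  rw [hσ2] at expand
  have e0 : (σ*c*(c*σ)).trace = (σ*c*c).trace := by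
    rw [show σ*c*(c*σ) = (σ*c*c)*σ from by noncomm_ring, Matrix.trace_mul_comm,
      show σ*(σ*c*c) = (σ*σ)*(c*c) from by noncomm_ring, hσ2,
      show σ*(c*c) = σ*c*c from by noncomm_ring]
  have e1 : (σ*c*σ*(c*σ)).trace = (σ*c*σ*c).trace := by
    rw [show σ*c*σ*(c*σ) = (σ*c*σ*c)*σ from by noncomm_ring, Matrix.trace_mul_comm,
      show σ*(σ*c*σ*c) = (σ*σ)*(c*(σ*c)) from by noncomm_ring, hσ2,
      show σ*(c*(σ*c)) = σ*c*σ*c from by noncomm_ring]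
  have hpos := trace_mul_conjT_nonneg B
  have htrace : (B * Bᴴ).trace = (σ*c*c).trace - (σ*c*σ*c).trace := by
    rw [expand, Matrix.trace_add, Matrix.trace_sub, Matrix.trace_sub, e0, e1]
    ring
  rw [htrace] at hpos
  rw [Complex.sub_re] at hpos
  linarith

end Stmt12Aux

set_option maxHeartbeats 1000000 in
open Matrix Stmt12Aux in
/-- For a pure state `σ` on `(ℂ²)^⊗n` (`d = 2ⁿ`) and a nontrivial
`n`-qubit Pauli operator `P = pauliN f`, setting `η = 1 − (Tr(σP))²` and
`K_σ(P) = Σ_{Q Pauli, QP = −PQ} (Tr(σQ))⁴`, one has `K_σ(P) ≤ d η² / 2`. -/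
theorem stmt12 {n : ℕ} (σ : Matrix (Fin n → Fin 2) (Fin n → Fin 2) ℂ)
    (hσH : σ.IsHermitian) (hσ2 : σ * σ = σ) (hσtr : σ.trace = 1)
    (f : Fin n → Fin 4) (hf : f ≠ fun _ => 0)
    (η : ℝ) (hη : η = 1 - ((σ * pauliN f).trace.re) ^ 2) :
    ∑ g ∈ Finset.univ.filter
        (fun g : Fin n → Fin 4 => pauliN g * pauliN f = -(pauliN f * pauliN g)),
      ((σ * pauliN g).trace.re) ^ 4 ≤ (2 ^ n : ℝ) * η ^ 2 / 2 := by
  classical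
  have hσ : σᴴ = σ := hσH
  set P : Matrix (Fin n → Fin 2) (Fin n → Fin 2) ℂ := pauliN f with hPdef
  have hPH : Pᴴ = P := pauliN_herm f
  have hP2 : P * P = 1 := pauliN_sq f
  set tf : ℝ := (σ * P).trace.re with htf
  set S := Finset.univ.filter
      (fun g : Fin n → Fin 4 => pauliN g * pauliN f = -(pauliN f * pauliN g)) with hS
  -- tf² ≤ 1
  have htf1 : tf ^ 2 ≤ 1 := by
    have h1 := cs1 hσ hσ2 hσtr hPH
    have h2 := cs2 hσ hσ2 hPH
    have h3 : (σ * P * P).trace = 1 := by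
      rw [Matrix.mul_assoc, hP2, Matrix.mul_one, hσtr]
    have h4 : (σ * P * P).trace.re = 1 := by rw [h3]; rfl
    linarith
  have hη0 : 0 ≤ η := by rw [hη]; linarith
  -- pointwise bound: each anticommuting trace squared ≤ η
  have pointwise : ∀ g ∈ S, ((σ * pauliN g).trace.re) ^ 2 ≤ η := by
    intro g hg
    rw [hS, Finset.mem_filter] at hg
    have hanti : pauliN g * P = -(P * pauliN g) := hg.2
    set Q : Matrix (Fin n → Fin 2) (Fin n → Fin 2) ℂ := pauliN g with hQdef
    have hQH : Qᴴ = Q := pauliN_herm g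
    have hQ2 : Q * Q = 1 := pauliN_sq g
    set b : ℝ := (σ * Q).trace.re with hb
    have htrP : (σ * P).trace = (tf : ℂ) := trace_mul_herm_real hσ hPH
    have htrQ : (σ * Q).trace = (b : ℂ) := trace_mul_herm_real hσ hQH
    set c : Matrix (Fin n → Fin 2) (Fin n → Fin 2) ℂ := (tf : ℂ) • P + (b : ℂ) • Q
      with hc
    have hcH : cᴴ = c := by
      rw [hc, Matrix.conjTranspose_add, Matrix.conjTranspose_smul,
        Matrix.conjTranspose_smul, hPH, hQH]
      simp
    have hcc : c * c = (((tf^2 + b^2 : ℝ)) : ℂ) • 1 := by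
      have e : c * c = ((tf:ℂ)*(tf:ℂ)) • (P*P) + ((tf:ℂ)*(b:ℂ)) • (P*Q + Q*P)
          + ((b:ℂ)*(b:ℂ)) • (Q*Q) := by
        rw [hc]; noncomm_ring
        module
      have hPQ : P * Q + Q * P = 0 := by rw [hanti]; simp
      rw [e, hPQ, hP2, hQ2, smul_zero, add_zero, ← add_smul]
      norm_cast
      push_cast
      ring_nf
    have htrc : (σ * c).trace = (((tf^2 + b^2 : ℝ)) : ℂ) := by
      rw [hc, Matrix.mul_add, Matrix.mul_smul, Matrix.mul_smul, Matrix.trace_add,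
        Matrix.trace_smul, Matrix.trace_smul, htrP, htrQ]
      simp only [smul_eq_mul]
      push_cast
      ring
    have htrcc : (σ * c * c).trace = (((tf^2 + b^2 : ℝ)) : ℂ) := by
      rw [Matrix.mul_assoc, hcc, Matrix.mul_smul, Matrix.mul_one, Matrix.trace_smul,
        hσtr]
      simp
    have hchain : ((σ * c).trace.re) ^ 2 ≤ (σ * c * c).trace.re :=
      le_trans (cs1 hσ hσ2 hσtr hcH) (cs2 hσ hσ2 hcH)
    rw [htrc, htrcc] at hchain
    rw [Complex.ofReal_re] at hchain
    have hr1 : tf^2 + b^2 ≤ 1 := by nlinarith [sq_nonneg tf, sq_nonneg b]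
    rw [hη]
    change b ^ 2 ≤ _
    linarith
  -- the operator R
  set R : Matrix (Fin n → Fin 2) (Fin n → Fin 2) ℂ :=
    (2⁻¹ : ℂ) • (σ - P * σ * P) with hR
  have hRH : Rᴴ = R := by
    rw [hR, Matrix.conjTranspose_smul, Matrix.conjTranspose_sub,
      Matrix.conjTranspose_mul, Matrix.conjTranspose_mul, hσ, hPH]
    simp [Matrix.mul_assoc]
  have keyR : ∀ g : Fin n → Fin 4, (R * pauliN g).trace =
      if pauliN g * pauliN f = -(pauliN f * pauliN g)
        then (σ * pauliN g).trace else 0 := by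
    intro g
    set Q : Matrix (Fin n → Fin 2) (Fin n → Fin 2) ℂ := pauliN g with hQdef
    have hRQ : (R * Q).trace = (2⁻¹ : ℂ) * ((σ*Q).trace - (P*σ*P*Q).trace) := by
      rw [hR, Matrix.smul_mul, Matrix.trace_smul, Matrix.sub_mul, Matrix.trace_sub]
      rfl
    have hcyc : (P*σ*P*Q).trace = (σ*(P*Q*P)).trace := by
      rw [show P*σ*P*Q = P*(σ*(P*Q)) from by noncomm_ring, Matrix.trace_mul_comm,
        show σ*(P*Q)*P = σ*(P*Q*P) from by noncomm_ring]
    by_cases hg : pauliN g * pauliN f = -(pauliN f * pauliN g)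
    · rw [if_pos hg]
      have hanti : Q * P = -(P * Q) := hg
      have h1 : P*Q*P = -Q := by
        rw [show P*Q*P = P*(Q*P) from by noncomm_ring, hanti, Matrix.mul_neg,
          show P*(P*Q) = (P*P)*Q from by noncomm_ring, hP2, Matrix.one_mul]
      rw [hRQ, hcyc, h1, Matrix.mul_neg, Matrix.trace_neg]
      ring
    · rw [if_neg hg]
      rcases pauliN_comm_or f g with hcomm | hac
      · have h1 : P*Q*P = Q := by
          rw [show P*Q*P = P*(Q*P) from by noncomm_ring, hcomm,
            show P*(P*Q) = (P*P)*Q from by noncomm_ring, hP2, Matrix.one_mul]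
        rw [hRQ, hcyc, h1]
        ring
      · exact absurd hac hg
  -- Parseval applied to R
  have parz := parseval R R
  -- sum over S of squares
  have sumsq : ∑ g ∈ S, (((σ * pauliN g).trace.re : ℝ)) ^ 2
      = ((2:ℂ)^n * (R * R).trace).re := by
    rw [← parz, Complex.re_sum]
    rw [hS, Finset.sum_filter]
    apply Finset.sum_congr rfl
    intro g _
    rw [keyR g]
    by_cases hg : pauliN g * pauliN f = -(pauliN f * pauliN g)
    · rw [if_pos hg, if_pos hg]
      rw [trace_mul_herm_real hσ (pauliN_herm g)]
      rw [← Complex.ofReal_mul]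
      simp [pow_two]
    · rw [if_neg hg, if_neg hg, mul_zero]
      rfl
  -- compute trace of R*R
  have expandR : R * R = ((2⁻¹ : ℂ)*(2⁻¹ : ℂ)) • (σ*σ - σ*(P*(σ*P)) - P*(σ*(P*σ))
      + P*(σ*((P*P)*(σ*P)))) := by
    rw [hR]; noncomm_ring
    module
  rw [hP2, hσ2] at expandR
  have eA : (σ*(P*(σ*P))).trace = (σ*P*σ*P).trace := by
    rw [show σ*(P*(σ*P)) = σ*P*σ*P from by noncomm_ring]
  have eB : (P*(σ*(P*σ))).trace = (σ*P*σ*P).trace := by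
    rw [Matrix.trace_mul_comm, show σ*(P*σ)*P = σ*P*σ*P from by noncomm_ring]
  have eC : (P*(σ*(1*(σ*P)))).trace = 1 := by
    rw [Matrix.trace_mul_comm, show σ*(1*(σ*P))*P = (σ*σ)*(P*P) from by noncomm_ring,
      hσ2, hP2, Matrix.mul_one, hσtr]
  have hRRtr : (R * R).trace
      = ((2⁻¹ : ℂ)*(2⁻¹ : ℂ)) * (2 - 2 * (σ*P*σ*P).trace) := by
    rw [expandR, Matrix.trace_smul, Matrix.trace_add, Matrix.trace_sub,
      Matrix.trace_sub, eA, eB, eC, hσtr]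
    simp only [smul_eq_mul]
    ring
  have hcs := cs1 hσ hσ2 hσtr hPH
  have sumB : ∑ g ∈ S, (((σ * pauliN g).trace.re : ℝ)) ^ 2 ≤ (2:ℝ)^n * η / 2 := by
    rw [sumsq, hRRtr]
    have : ((2:ℂ)^n * (((2⁻¹ : ℂ)*(2⁻¹ : ℂ)) * (2 - 2 * (σ*P*σ*P).trace))).re
        = (2:ℝ)^n * (1 - (σ*P*σ*P).trace.re) / 2 := by
      have h2n : ((2:ℂ)^n) = (((2:ℝ)^n : ℝ) : ℂ) := by push_cast; ring
      rw [h2n]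
      rw [show (((2:ℝ)^n : ℝ) : ℂ) * (((2⁻¹ : ℂ)*(2⁻¹ : ℂ)) * (2 - 2 * (σ*P*σ*P).trace))
          = (((2:ℝ)^n / 2 : ℝ) : ℂ) * (1 - (σ*P*σ*P).trace) from by push_cast; ring]
      rw [Complex.re_ofReal_mul, Complex.sub_re, Complex.one_re]
      ring
    rw [this, hη]
    gcongr
  -- final combination
  calc ∑ g ∈ S, ((σ * pauliN g).trace.re) ^ 4
      ≤ ∑ g ∈ S, η * ((σ * pauliN g).trace.re) ^ 2 := by
        apply Finset.sum_le_sum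
        intro g hg
        have h1 := pointwise g hg
        have h2 : (0:ℝ) ≤ ((σ * pauliN g).trace.re) ^ 2 := sq_nonneg _
        nlinarith
    _ = η * ∑ g ∈ S, ((σ * pauliN g).trace.re) ^ 2 := by rw [Finset.mul_sum]
    _ ≤ η * ((2:ℝ)^n * η / 2) := by
        apply mul_le_mul_of_nonneg_left sumB hη0
    _ = (2 ^ n : ℝ) * η ^ 2 / 2 := by ring
end
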